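/- arXiv:2302.09194 — 7 statements merged into one kernel-verified Lean document; each statement's English description precedes it below -/
import Mathlib

section
/- Let M be an m×n matrix of real numbers. If there exist two disjoint sets A = {a_1,...,a_ℓ} and B = {b_1,...,b_ℓ} of indices in [m]×[n] such that (i) M_{a_k} < M_{b_k} for each k, (ii) A and B have equally many elements in each row, and (iii) A and B have equally many elements in each column, then M is not expressible as an outer sum x ∘ y of two vectors x ∈ ℝ^m, y ∈ ℝ^n. -/
open Finset

lemma fiber_sum_aux {ℓ d : ℕ} (g : Fin ℓ → Fin d) (x : Fin d → ℝ) :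
    ∑ k, x (g k) = ∑ i, ((univ.filter (fun k => g k = i)).card : ℝ) * x i := by
  rw [← Finset.sum_fiberwise univ g (fun k => x (g k))]
  refine Finset.sum_congr rfl fun i _ => ?_
  have : ∑ k ∈ univ.filter (fun k => g k = i), x (g k)
      = ∑ _k ∈ univ.filter (fun k => g k = i), x i :=
    Finset.sum_congr rfl fun k hk => by rw [(Finset.mem_filter.mp hk).2]
  rw [this, Finset.sum_const, nsmul_eq_mul]

theorem taboo_configuration_not_realizable {m n ℓ : ℕ} (hℓ : 0 < ℓ)
    (M : Fin m × Fin n → ℝ)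
    (a b : Fin ℓ → Fin m × Fin n)
    (ha : Function.Injective a) (hb : Function.Injective b)
    (hdisj : ∀ k k' : Fin ℓ, a k ≠ b k')
    (hlt : ∀ k : Fin ℓ, M (a k) < M (b k))
    (hrow : ∀ i : Fin m,
      (univ.filter (fun k : Fin ℓ => (a k).1 = i)).card =
        (univ.filter (fun k : Fin ℓ => (b k).1 = i)).card)
    (hcol : ∀ j : Fin n,
      (univ.filter (fun k : Fin ℓ => (a k).2 = j)).card =
        (univ.filter (fun k : Fin ℓ => (b k).2 = j)).card) :
    ¬ ∃ (x : Fin m → ℝ) (y : Fin n → ℝ),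
        ∀ p q : Fin m × Fin n, M p < M q ↔ x p.1 + y p.2 < x q.1 + y q.2 := by
  rintro ⟨x, y, hxy⟩
  have hsum : ∑ k : Fin ℓ, (x (a k).1 + y (a k).2)
      < ∑ k : Fin ℓ, (x (b k).1 + y (b k).2) := by
    apply Finset.sum_lt_sum_of_nonempty
    · exact Finset.univ_nonempty_iff.mpr ⟨⟨0, hℓ⟩⟩
    · intro k _
      exact (hxy (a k) (b k)).mp (hlt k)
  have hx : ∑ k : Fin ℓ, x (a k).1 = ∑ k : Fin ℓ, x (b k).1 := by
    rw [fiber_sum_aux (fun k => (a k).1) x, fiber_sum_aux (fun k => (b k).1) x]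
    exact Finset.sum_congr rfl fun i _ => by rw [hrow i]
  have hy : ∑ k : Fin ℓ, y (a k).2 = ∑ k : Fin ℓ, y (b k).2 := by
    rw [fiber_sum_aux (fun k => (a k).2) y, fiber_sum_aux (fun k => (b k).2) y]
    exact Finset.sum_congr rfl fun j _ => by rw [hcol j]
  rw [Finset.sum_add_distrib, Finset.sum_add_distrib, hx, hy] at hsum
  exact lt_irrefl _ hsum
end

section
/- Every 2×n standard Young tableau is realizable: for any standard Young tableau T of shape 2×n, there exist increasing vectors x ∈ ℝ^2 and y ∈ ℝ^n with all entries of the outer sum x ∘ y distinct, such that the relative order of the entries of x ∘ y coincides with T. -/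
/-- The outer sum of two vectors, as a function on cells. -/
def outerSum {m n : ℕ} (x : Fin m → ℝ) (y : Fin n → ℝ) (p : Fin m × Fin n) : ℝ :=
  x p.1 + y p.2

/-- `T` is a standard Young tableau of rectangular shape `m × n`:
a bijective filling increasing along rows and down columns. -/
def IsSYT {m n : ℕ} (T : Fin m × Fin n → Fin (m * n)) : Prop :=
  Function.Bijective T ∧
    (∀ p q : Fin m × Fin n, p.1 = q.1 → p.2 < q.2 → T p < T q) ∧
    (∀ p q : Fin m × Fin n, p.2 = q.2 → p.1 < q.1 → T p < T q)

/-- The increasing vectors `x`, `y` realize `T`: the outer sum `x ∘ y` has distinct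
entries whose relative order coincides with `T`. -/
def Realizes {m n : ℕ} (x : Fin m → ℝ) (y : Fin n → ℝ)
    (T : Fin m × Fin n → Fin (m * n)) : Prop :=
  StrictMono x ∧ StrictMono y ∧ Function.Injective (outerSum x y) ∧
    ∀ p q : Fin m × Fin n, T p < T q ↔ outerSum x y p < outerSum x y q

/-- `T` is realizable as the relative order of an outer sum of increasing vectors. -/
def IsRealizable {m n : ℕ} (T : Fin m × Fin n → Fin (m * n)) : Prop :=
  ∃ x y, Realizes x y T

/-- The number of realizable `m × n` standard Young tableaux. -/
noncomputable def rSYTcard (m n : ℕ) : ℕ :=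
  Nat.card {T : Fin m × Fin n → Fin (m * n) // IsSYT T ∧ IsRealizable T}

/-- The number of `m × n` standard Young tableaux. -/
noncomputable def SYTcard (m n : ℕ) : ℕ :=
  Nat.card {T : Fin m × Fin n → Fin (m * n) // IsSYT T}

section foldlLemmas

lemma init_le_foldl_max (g : ℕ → ℝ) : ∀ (l : List ℕ) (init : ℝ),
    init ≤ l.foldl (fun a k => max a (g k)) init := by
  intro l
  induction l with
  | nil => intro init; simp
  | cons x xs ih => intro init; exact le_trans (le_max_left _ _) (ih _)

lemma mem_le_foldl_max (g : ℕ → ℝ) : ∀ (l : List ℕ) (init : ℝ) (x : ℕ), x ∈ l →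
    g x ≤ l.foldl (fun a k => max a (g k)) init := by
  intro l
  induction l with
  | nil => intro init x hx; simp at hx
  | cons y ys ih =>
    intro init x hx
    rcases List.mem_cons.mp hx with h | h
    · subst h; exact le_trans (le_max_right _ _) (init_le_foldl_max g ys _)
    · exact ih _ x h

lemma foldl_max_lt (g : ℕ → ℝ) (z : ℝ) : ∀ (l : List ℕ) (init : ℝ), init < z →
    (∀ x ∈ l, g x < z) → l.foldl (fun a k => max a (g k)) init < z := by
  intro l
  induction l with
  | nil => intro init h _; simpa using h
  | cons y ys ih =>
    intro init h hall
    exact ih _ (max_lt h (hall y List.mem_cons_self))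
      (fun x hx => hall x (List.mem_cons_of_mem _ hx))

lemma foldl_min_le_init (g : ℕ → ℝ) : ∀ (l : List ℕ) (init : ℝ),
    l.foldl (fun a k => min a (g k)) init ≤ init := by
  intro l
  induction l with
  | nil => intro init; simp
  | cons x xs ih => intro init; exact le_trans (ih _) (min_le_left _ _)

lemma foldl_min_le_mem (g : ℕ → ℝ) : ∀ (l : List ℕ) (init : ℝ) (x : ℕ), x ∈ l →
    l.foldl (fun a k => min a (g k)) init ≤ g x := by
  intro l
  induction l with
  | nil => intro init x hx; simp at hx
  | cons y ys ih =>
    intro init x hx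
    rcases List.mem_cons.mp hx with h | h
    · subst h; exact le_trans (foldl_min_le_init g ys _) (min_le_right _ _)
    · exact ih _ x h

lemma lt_foldl_min (g : ℕ → ℝ) (z : ℝ) : ∀ (l : List ℕ) (init : ℝ), z < init →
    (∀ x ∈ l, z < g x) → z < l.foldl (fun a k => min a (g k)) init := by
  intro l
  induction l with
  | nil => intro init h _; simpa using h
  | cons y ys ih =>
    intro init h hall
    exact ih _ (lt_min h (hall y List.mem_cons_self))
      (fun x hx => hall x (List.mem_cons_of_mem _ hx))

end foldlLemmas

noncomputable def lowB (P : ℕ → ℕ → Bool) (l : List ℝ) : ℝ :=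
  ((List.range l.length).filter (fun k => !(P l.length k))).foldl
    (fun a k => max a (l.getD k 0 + 1)) (l.getD (l.length - 1) 0)

noncomputable def uppB (P : ℕ → ℕ → Bool) (l : List ℝ) : ℝ :=
  ((List.range l.length).filter (fun k => P l.length k)).foldl
    (fun a k => min a (l.getD k 0 + 1)) (lowB P l + 1)

noncomputable def nextVal (P : ℕ → ℕ → Bool) (l : List ℝ) : ℝ :=
  (lowB P l + uppB P l) / 2

noncomputable def aList (P : ℕ → ℕ → Bool) : ℕ → List ℝ
  | 0 => [0]
  | j + 1 => aList P j ++ [nextVal P (aList P j)]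

noncomputable def aSeq (P : ℕ → ℕ → Bool) (j : ℕ) : ℝ := (aList P j).getD j 0

lemma aList_length (P : ℕ → ℕ → Bool) : ∀ j, (aList P j).length = j + 1 := by
  intro j; induction j with
  | zero => rfl
  | succ j ih => simp [aList, ih]

lemma aSeq_succ (P : ℕ → ℕ → Bool) (j : ℕ) :
    aSeq P (j + 1) = nextVal P (aList P j) := by
  unfold aSeq
  rw [show aList P (j+1) = aList P j ++ [nextVal P (aList P j)] from rfl]
  rw [List.getD_append_right _ _ _ _ (by simp [aList_length])]
  simp [aList_length]

lemma aList_getD (P : ℕ → ℕ → Bool) : ∀ j k, k ≤ j → (aList P j).getD k 0 = aSeq P k := by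
  intro j
  induction j with
  | zero => intro k hk; have : k = 0 := Nat.le_zero.mp hk; subst this; rfl
  | succ j ih =>
    intro k hk
    rcases Nat.lt_or_ge k (j+1) with h | h
    · rw [show aList P (j+1) = aList P j ++ [nextVal P (aList P j)] from rfl]
      rw [List.getD_append _ _ _ _ (by simp [aList_length]; omega)]
      exact ih k (by omega)
    · have hk1 : k = j + 1 := by omega
      subst hk1; rfl

lemma aSeq_inv (P : ℕ → ℕ → Bool)
    (h1 : ∀ j j' k : ℕ, j' ≤ j → P j k = true → P j' k = true)
    (h2 : ∀ j k k' : ℕ, k ≤ k' → P j k = true → P j k' = true) :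
    ∀ j k : ℕ, k < j →
      aSeq P k < aSeq P j ∧
      (P j k = true → aSeq P j < aSeq P k + 1) ∧
      (P j k = false → aSeq P k + 1 < aSeq P j) := by
  intro j
  induction j using Nat.strong_induction_on with
  | _ j IH =>
    match j with
    | 0 => intro k hk; omega
    | jj + 1 =>
      have hlen : (aList P jj).length = jj + 1 := aList_length P jj
      set l := aList P jj with hl
      have hgetD : ∀ k, k ≤ jj → l.getD k 0 = aSeq P k := fun k hk => aList_getD P jj k hk
      have hgetDlast : l.getD (l.length - 1) 0 = aSeq P jj := by
        rw [hlen]; simpa using hgetD jj le_rfl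
      -- feasibility : lowB < uppB
      have hLU : lowB P l < uppB P l := by
        unfold uppB
        apply lt_foldl_min
        · exact lt_add_one _
        · intro k' hk'
          obtain ⟨hk'r, hk'P⟩ := List.mem_filter.mp hk'
          have hk'lt : k' < jj + 1 := by
            have := List.mem_range.mp hk'r; omega
          rw [hlen] at hk'P
          rw [hgetD k' (by omega)]
          unfold lowB
          apply foldl_max_lt
          · rw [hgetDlast]
            rcases Nat.lt_or_ge k' jj with hkj | hkj
            · have hPjj : P jj k' = true := h1 (jj+1) jj k' (by omega) hk'P
              exact (IH jj (by omega) k' hkj).2.1 hPjj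
            · have : k' = jj := by omega
              subst this; exact lt_add_one _
          · intro k hk
            obtain ⟨hkr, hkP⟩ := List.mem_filter.mp hk
            have hklt : k < jj + 1 := by
              have := List.mem_range.mp hkr; omega
            rw [hlen] at hkP
            have hPk : P (jj+1) k = false := by
              simpa using hkP
            have hkk' : k < k' := by
              by_contra hc
              push_neg at hc
              have := h2 (jj+1) k' k hc hk'P
              rw [hPk] at this; exact Bool.noConfusion this
            rw [hgetD k (by omega)]
            have := (IH k' (by omega) k hkk').1
            linarith
      have haj : aSeq P (jj+1) = (lowB P l + uppB P l) / 2 := by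
        rw [aSeq_succ]; rfl
      have hajL : lowB P l < aSeq P (jj+1) := by rw [haj]; linarith
      have hajU : aSeq P (jj+1) < uppB P l := by rw [haj]; linarith
      have hjjL : aSeq P jj ≤ lowB P l := by
        unfold lowB
        rw [← hgetDlast]
        exact init_le_foldl_max _ _ _
      intro k hk
      have hkjj : k ≤ jj := by omega
      have hmono : aSeq P k < aSeq P (jj+1) := by
        rcases Nat.lt_or_ge k jj with h | h
        · have := (IH jj (by omega) k h).1; linarith
        · have : k = jj := by omega
          subst this; linarith
      refine ⟨hmono, ?_, ?_⟩
      · intro hP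
        have hkmem : k ∈ (List.range l.length).filter (fun k => P l.length k) := by
          refine List.mem_filter.mpr ⟨List.mem_range.mpr (by omega), ?_⟩
          rw [hlen]; exact hP
        have : uppB P l ≤ l.getD k 0 + 1 := by
          unfold uppB
          exact foldl_min_le_mem (fun k => l.getD k 0 + 1) _ _ _ hkmem
        rw [hgetD k hkjj] at this
        linarith
      · intro hP
        have hkmem : k ∈ (List.range l.length).filter (fun k => !(P l.length k)) := by
          refine List.mem_filter.mpr ⟨List.mem_range.mpr (by omega), ?_⟩
          rw [hlen]; simp [hP]
        have : l.getD k 0 + 1 ≤ lowB P l := by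
          unfold lowB
          exact mem_le_foldl_max (fun k => l.getD k 0 + 1) _ _ _ hkmem
        rw [hgetD k hkjj] at this
        linarith

theorem all_2xn_tableaux_realizable (n : ℕ) (T : Fin 2 × Fin n → Fin (2 * n))
    (hT : IsSYT T) : IsRealizable T := by
  obtain ⟨hbij, hrow, hcol⟩ := hT
  rcases Nat.eq_zero_or_pos n with hn | hn
  · subst hn
    exact ⟨fun i => (i.val : ℝ), fun k => k.elim0,
      fun a b h => Nat.cast_lt.mpr h, fun a => a.elim0,
      fun p _ _ => p.2.elim0, fun p => p.2.elim0⟩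
  · have hN1 : n - 1 < n := by omega
    set idx : ℕ → Fin n := fun j => ⟨min j (n-1), lt_of_le_of_lt (min_le_right _ _) hN1⟩ with hidx
    set P : ℕ → ℕ → Bool := fun j k => decide (T (0, idx j) < T (1, idx k)) with hP
    have sm0 : StrictMono (fun j : Fin n => T (0, j)) := fun a b h => hrow (0,a) (0,b) rfl h
    have sm1 : StrictMono (fun j : Fin n => T (1, j)) := fun a b h => hrow (1,a) (1,b) rfl h
    have hdiag : ∀ j : Fin n, T (0, j) < T (1, j) :=
      fun j => hcol (0,j) (1,j) rfl (by show (0 : Fin 2) < 1; decide)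
    have hidx_mono : Monotone idx := by
      intro a b h
      simp only [hidx, Fin.mk_le_mk]
      omega
    have h1 : ∀ j j' k : ℕ, j' ≤ j → P j k = true → P j' k = true := by
      intro j j' k hle hPt
      simp only [hP, decide_eq_true_eq] at hPt ⊢
      exact lt_of_le_of_lt (sm0.monotone (hidx_mono hle)) hPt
    have h2 : ∀ j k k' : ℕ, k ≤ k' → P j k = true → P j k' = true := by
      intro j k k' hle hPt
      simp only [hP, decide_eq_true_eq] at hPt ⊢
      exact lt_of_lt_of_le hPt (sm1.monotone (hidx_mono hle))
    have hidx_eq : ∀ j : Fin n, idx j.val = j := by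
      intro j
      apply Fin.ext
      simp only [hidx]
      omega
    have hPiff : ∀ j k : Fin n, (P j.val k.val = true) ↔ T (0, j) < T (1, k) := by
      intro j k
      simp [hP, hidx_eq]
    have INV := aSeq_inv P h1 h2
    set y : Fin n → ℝ := fun k => aSeq P k.val with hy
    have smy : StrictMono y := by
      intro a b h
      exact (INV b.val a.val h).1
    have hfacts : ∀ j k : Fin n, j.val ≤ k.val → T (0, j) < T (1, k) ∧ y j ≤ y k := by
      intro j k h
      refine ⟨lt_of_le_of_lt (sm0.monotone (show j ≤ k from h)) (hdiag k), ?_⟩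
      rcases eq_or_lt_of_le h with he | hlt
      · have : j = k := Fin.ext he
        subst this; exact le_rfl
      · exact le_of_lt (INV k.val j.val hlt).1
    have key1 : ∀ j k : Fin n, T (0, j) < T (1, k) ↔ y j < y k + 1 := by
      intro j k
      rcases lt_or_ge k.val j.val with h | h
      · obtain ⟨hm, ht, hf⟩ := INV j.val k.val h
        constructor
        · intro h'; exact ht ((hPiff j k).mpr h')
        · intro h'
          by_contra hc
          have hPf : P j.val k.val = false := by
            rw [Bool.eq_false_iff]
            intro hcc; exact hc ((hPiff j k).mp hcc)
          have := hf hPf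
          simp only [hy] at h' ⊢
          linarith
      · obtain ⟨hTlt, hyle⟩ := hfacts j k h
        exact iff_of_true hTlt (by linarith)
    have key2 : ∀ j k : Fin n, T (1, k) < T (0, j) ↔ y k + 1 < y j := by
      intro j k
      rcases lt_or_ge k.val j.val with h | h
      · obtain ⟨hm, ht, hf⟩ := INV j.val k.val h
        constructor
        · intro h'
          apply hf
          rw [Bool.eq_false_iff]
          intro hcc
          exact absurd ((hPiff j k).mp hcc) (lt_asymm h')
        · intro h'
          by_contra hc
          have hne : T (0, j) ≠ T (1, k) := by
            intro he
            have := hbij.1 he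
            simp [Prod.ext_iff] at this
          have hTlt : T (0, j) < T (1, k) := by
            rcases lt_trichotomy (T (0,j)) (T (1,k)) with h'' | h'' | h''
            · exact h''
            · exact absurd h'' hne
            · exact absurd h'' hc
          have := ht ((hPiff j k).mpr hTlt)
          linarith
      · obtain ⟨hTlt, hyle⟩ := hfacts j k h
        exact iff_of_false (fun hcc => absurd hTlt (lt_asymm hcc)) (by linarith)
    set x : Fin 2 → ℝ := fun i => (i.val : ℝ) with hx
    have e0 : x 0 = 0 := by simp [hx]
    have e1 : x 1 = 1 := by simp [hx]
    have smx : StrictMono x := fun a b h => Nat.cast_lt.mpr h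
    have mainIff : ∀ p q : Fin 2 × Fin n, T p < T q ↔ outerSum x y p < outerSum x y q := by
      rintro ⟨i, a⟩ ⟨i', b⟩
      fin_cases i <;> fin_cases i'
      · show T (0, a) < T (0, b) ↔ x 0 + y a < x 0 + y b
        constructor
        · intro h; exact (add_lt_add_iff_left (x 0)).mpr (smy (sm0.lt_iff_lt.mp h))
        · intro h; exact sm0.lt_iff_lt.mpr (smy.lt_iff_lt.mp (lt_of_add_lt_add_left h))
      · show T (0, a) < T (1, b) ↔ x 0 + y a < x 1 + y b
        rw [key1 a b, e0, e1]
        constructor <;> intro <;> linarith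
      · show T (1, a) < T (0, b) ↔ x 1 + y a < x 0 + y b
        rw [key2 b a, e0, e1]
        constructor <;> intro <;> linarith
      · show T (1, a) < T (1, b) ↔ x 1 + y a < x 1 + y b
        constructor
        · intro h; exact (add_lt_add_iff_left (x 1)).mpr (smy (sm1.lt_iff_lt.mp h))
        · intro h; exact sm1.lt_iff_lt.mpr (smy.lt_iff_lt.mp (lt_of_add_lt_add_left h))
    have hinj : Function.Injective (outerSum x y) := by
      intro p q h
      by_contra hne
      have hTne : T p ≠ T q := fun he => hne (hbij.1 he)
      rcases hTne.lt_or_gt with h' | h'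
      · exact absurd h (ne_of_lt ((mainIff p q).mp h'))
      · exact absurd h.symm (ne_of_lt ((mainIff q p).mp h'))
    exact ⟨x, y, smx, smy, hinj, mainIff⟩
end

section
/- The total number of m×n standard Young tableaux equals (mn)! * ∏_{j=0}^{m-1} j!/(n+j)!. -/
open Finset


/-- `gg z = 1/z!` for `z ≥ 0`, else `0`. -/
noncomputable def gg (z : ℤ) : ℚ := if 0 ≤ z then ((z.toNat).factorial : ℚ)⁻¹ else 0

lemma gg_sub_one (z : ℤ) : gg (z - 1) = z * gg z := by
  rcases lt_or_ge 0 z with hz | hz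
  · have h1 : (0:ℤ) ≤ z - 1 := by omega
    have h0 : (0:ℤ) ≤ z := by omega
    rw [gg, gg, if_pos h1, if_pos h0]
    set t := (z-1).toNat with ht
    have hzn : z.toNat = t + 1 := by omega
    have hzt : (z : ℚ) = (t : ℚ) + 1 := by
      have : z = (t : ℤ) + 1 := by omega
      rw [this]; push_cast; ring
    have htne : ((t:ℚ)+1) ≠ 0 := by positivity
    rw [hzn, Nat.factorial_succ, hzt]
    push_cast
    rw [mul_inv, ← mul_assoc, mul_inv_cancel₀ htne, one_mul]
  · rcases eq_or_lt_of_le hz with he | hlt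
    · subst he
      rw [gg, gg, if_neg (by omega)]
      simp
    · rw [gg, gg, if_neg (by omega), if_neg (by omega)]
      ring

lemma gg_neg {z : ℤ} (h : z < 0) : gg z = 0 := by rw [gg, if_neg (by omega)]

/-- The reflection-principle alternating sum. -/
noncomputable def Fm {m : ℕ} (a : Fin m → ℤ) : ℚ :=
  ∑ σ : Equiv.Perm (Fin m), ((Equiv.Perm.sign σ : ℤ) : ℚ) * ∏ i, gg (a i + (σ i : ℤ) - (i : ℤ))

lemma Fm_zero {m : ℕ} : Fm (fun _ : Fin m => (0:ℤ)) = 1 := by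
  rw [Fm, Finset.sum_eq_single (1 : Equiv.Perm (Fin m))]
  · simp [gg]
  · intro σ _ hσ
    have : ∃ i, (σ i : ℤ) < (i : ℤ) := by
      by_contra hc
      push_neg at hc
      apply hσ
      have hsum : ∑ i : Fin m, ((σ i : ℕ)) = ∑ i : Fin m, (i : ℕ) := Equiv.sum_comp σ _
      have hall : ∀ i : Fin m, (i : ℕ) = (σ i : ℕ) := by
        intro i
        have := (Finset.sum_eq_sum_iff_of_le (fun i _ => by exact_mod_cast hc i)).mp hsum.symm
        exact this i (mem_univ i)
      ext i
      exact (hall i).symm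
    obtain ⟨i, hi⟩ := this
    have : gg ((0:ℤ) + (σ i : ℤ) - i) = 0 := gg_neg (by omega)
    rw [Finset.prod_eq_zero (mem_univ i) this, mul_zero]
  · simp

lemma Fm_collision {m : ℕ} (a : Fin m → ℤ) {i j : Fin m} (hij : i ≠ j)
    (h : a i - (i : ℤ) = a j - (j : ℤ)) : Fm a = 0 := by
  set τ := Equiv.swap i j with hτ
  have key : ∀ σ : Equiv.Perm (Fin m),
      ((Equiv.Perm.sign (σ * τ) : ℤ) : ℚ) * ∏ x, gg (a x + ((σ * τ) x : ℤ) - (x : ℤ))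
      = -(((Equiv.Perm.sign σ : ℤ) : ℚ) * ∏ x, gg (a x + (σ x : ℤ) - (x : ℤ))) := by
    intro σ
    have hsign : Equiv.Perm.sign (σ * τ) = -Equiv.Perm.sign σ := by
      rw [Equiv.Perm.sign_mul, Equiv.Perm.sign_swap hij, mul_neg_one]
    have haτ : ∀ x : Fin m, a (τ x) - ((τ x : Fin m) : ℤ) = a x - (x : ℤ) := by
      intro x
      rcases eq_or_ne x i with rfl | hxi
      · rw [hτ, Equiv.swap_apply_left]; omega
      rcases eq_or_ne x j with rfl | hxj
      · rw [hτ, Equiv.swap_apply_right]; omega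
      · rw [hτ, Equiv.swap_apply_of_ne_of_ne hxi hxj]
    have hprod : ∏ x, gg (a x + ((σ * τ) x : ℤ) - (x : ℤ))
        = ∏ x, gg (a x + (σ x : ℤ) - (x : ℤ)) := by
      rw [← Equiv.prod_comp τ (fun x => gg (a x + ((σ * τ) x : ℤ) - (x : ℤ)))]
      apply Finset.prod_congr rfl
      intro x _
      have : τ (τ x) = x := Equiv.swap_apply_self i j x
      simp only [Equiv.Perm.mul_apply, this]
      congr 1
      have := haτ x
      omega
    rw [hsign, hprod]
    push_cast
    ring
  have h2 : Fm a + Fm a = 0 := by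
    nth_rewrite 1 [Fm]
    rw [← Equiv.sum_comp (Equiv.mulRight τ)
      (fun σ : Equiv.Perm (Fin m) => ((Equiv.Perm.sign σ : ℤ) : ℚ) * ∏ x, gg (a x + (σ x : ℤ) - (x : ℤ)))]
    rw [Fm, ← Finset.sum_add_distrib]
    apply Finset.sum_eq_zero
    intro σ _
    have := key σ
    simp only [Equiv.coe_mulRight] at *
    rw [this]
    ring
  linarith

lemma Fm_neg_entry {m : ℕ} (a : Fin m → ℤ) (i : Fin m)
    (h : a i + (m : ℤ) - 1 - (i : ℤ) < 0) : Fm a = 0 := by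
  rw [Fm]
  apply Finset.sum_eq_zero
  intro σ _
  have : gg (a i + (σ i : ℤ) - (i : ℤ)) = 0 := by
    apply gg_neg
    have : (σ i : ℕ) < m := (σ i).isLt
    omega
  rw [Finset.prod_eq_zero (mem_univ i) this, mul_zero]

lemma Fm_rec {m : ℕ} (a : Fin m → ℤ) (N : ℕ) (hsum : ∑ i, a i = (N : ℤ) + 1) :
    ((N : ℚ) + 1) * Fm a = ∑ i : Fin m, Fm (fun j => a j - if j = i then 1 else 0) := by
  have key : ∀ σ : Equiv.Perm (Fin m),
      ∑ i : Fin m, ∏ j, gg ((a j - if j = i then 1 else 0) + (σ j : ℤ) - (j : ℤ))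
      = ((N : ℚ) + 1) * ∏ j, gg (a j + (σ j : ℤ) - (j : ℤ)) := by
    intro σ
    set b : Fin m → ℤ := fun j => a j + (σ j : ℤ) - (j : ℤ) with hb
    have hterm : ∀ i : Fin m,
        ∏ j, gg ((a j - if j = i then 1 else 0) + (σ j : ℤ) - (j : ℤ))
        = ((b i : ℤ) : ℚ) * ∏ j, gg (b j) := by
      intro i
      rw [← Finset.mul_prod_erase univ _ (mem_univ i), if_pos rfl]
      have h1 : (a i - 1) + (σ i : ℤ) - (i : ℤ) = b i - 1 := by rw [hb]; ring
      rw [h1, gg_sub_one]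
      rw [Finset.prod_congr rfl (g := fun j => gg (b j)) (fun j hj => by
        rw [if_neg (Finset.ne_of_mem_erase hj)]; ring_nf; rfl)]
      rw [mul_assoc, Finset.mul_prod_erase univ (fun j => gg (b j)) (mem_univ i)]
    rw [Finset.sum_congr rfl (fun i _ => hterm i), ← Finset.sum_mul]
    congr 1
    have hbs : ∑ i, b i = (N:ℤ) + 1 := by
      have h1 : ∑ i : Fin m, ((σ i : ℕ) : ℤ) = ∑ i : Fin m, ((i : ℕ) : ℤ) :=
        Equiv.sum_comp σ (fun i : Fin m => ((i : ℕ) : ℤ))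
      simp only [hb]
      rw [Finset.sum_sub_distrib, Finset.sum_add_distrib, h1, hsum]
      ring
    rw [← Int.cast_sum, hbs]
    push_cast; ring
  unfold Fm
  rw [Finset.sum_comm, Finset.mul_sum]
  apply Finset.sum_congr rfl
  intro σ _
  rw [← Finset.mul_sum, key σ]
  ring

/-- number of occurrences of letter `i` among the first `k` letters of `w`. -/
def cnt {N m : ℕ} (w : Fin N → Fin m) (k : ℕ) (i : Fin m) : ℕ :=
  ∑ j : Fin N, if (j : ℕ) < k ∧ w j = i then 1 else 0

/-- `w` is a ballot word with final letter counts `a`. -/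
def IsBallot {N m : ℕ} (a : Fin m → ℕ) (w : Fin N → Fin m) : Prop :=
  (∀ i, cnt w N i = a i) ∧ ∀ (k : ℕ) (i i' : Fin m), i ≤ i' → cnt w k i' ≤ cnt w k i

lemma cnt_ge {N m : ℕ} (w : Fin N → Fin m) {k : ℕ} (hk : N ≤ k) (i : Fin m) :
    cnt w k i = cnt w N i := by
  unfold cnt
  apply Finset.sum_congr rfl
  intro j _
  have h1 : (j : ℕ) < k := lt_of_lt_of_le j.isLt hk
  simp [h1, j.isLt]

lemma cnt_snoc_le {N m : ℕ} (w : Fin N → Fin m) (x : Fin m) {k : ℕ} (hk : k ≤ N) (i : Fin m) :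
    cnt (Fin.snoc w x) k i = cnt w k i := by
  unfold cnt
  rw [Fin.sum_univ_castSucc]
  have hlast : ¬ ((Fin.last N : ℕ) < k) := by simp [Fin.val_last]; omega
  rw [if_neg (by tauto)]
  simp only [Fin.snoc_castSucc, Fin.coe_castSucc, add_zero]

lemma cnt_snoc_top {N m : ℕ} (w : Fin N → Fin m) (x : Fin m) (i : Fin m) :
    cnt (Fin.snoc w x) (N + 1) i = cnt w N i + if x = i then 1 else 0 := by
  unfold cnt
  rw [Fin.sum_univ_castSucc]
  congr 1
  · apply Finset.sum_congr rfl
    intro j _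
    simp only [Fin.snoc_castSucc, Fin.coe_castSucc]
    have h1 : (j : ℕ) < N + 1 := by omega
    have h2 : (j : ℕ) < N := j.isLt
    simp [h1, h2]
  · simp [Fin.snoc_last, Fin.val_last]

lemma nat_card_sigma {m : ℕ} (β : Fin m → Type) [∀ i, Finite (β i)] :
    Nat.card ((i : Fin m) × β i) = ∑ i, Nat.card (β i) := by
  letI : ∀ i, Fintype (β i) := fun i => Fintype.ofFinite (β i)
  simp [Nat.card_eq_fintype_card]


lemma ballot_init {N m : ℕ} {a : Fin m → ℕ} {w : Fin (N+1) → Fin m} (hw : IsBallot a w)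
    {i : Fin m} (hlast : w (Fin.last N) = i) :
    IsBallot (fun j => a j - if j = i then 1 else 0) (Fin.init w) := by
  have hsnoc : Fin.snoc (Fin.init w) i = w := by rw [← hlast]; exact Fin.snoc_init_self w
  constructor
  · intro j
    have h1 : cnt w (N+1) j = cnt (Fin.init w) N j + if i = j then 1 else 0 := by
      conv_lhs => rw [← hsnoc]
      exact cnt_snoc_top _ _ _
    have h2 := hw.1 j
    beta_reduce
    by_cases hji : j = i
    · subst hji
      rw [if_pos rfl] at h1 ⊢
      omega
    · rw [if_neg (fun h => hji h.symm)] at h1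
      rw [if_neg hji]
      omega
  · intro k j j' hjj'
    rcases le_or_gt k N with hk | hk
    · have h3 : ∀ l, cnt (Fin.init w) k l = cnt w k l := by
        intro l
        conv_rhs => rw [← hsnoc]
        rw [cnt_snoc_le _ _ hk]
      rw [h3 j, h3 j']
      exact hw.2 k j j' hjj'
    · have h4 : ∀ l, cnt (Fin.init w) k l = cnt w N l := by
        intro l
        rw [cnt_ge _ (by omega) l]
        conv_rhs => rw [← hsnoc]
        rw [cnt_snoc_le _ _ (le_refl N)]
      rw [h4 j, h4 j']
      exact hw.2 N j j' hjj'

lemma ballot_snoc {N m : ℕ} {a : Fin m → ℕ} (ha : Antitone a) {i : Fin m} (hai : 1 ≤ a i)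
    {w' : Fin N → Fin m} (hw' : IsBallot (fun j => a j - if j = i then 1 else 0) w') :
    IsBallot a (Fin.snoc w' i) := by
  have htot : ∀ l, cnt (Fin.snoc w' i) (N+1) l = a l := by
    intro l
    rw [cnt_snoc_top, hw'.1 l]
    beta_reduce
    by_cases hl : l = i
    · subst hl
      simp
      omega
    · rw [if_neg (show ¬ i = l from fun h => hl h.symm), if_neg hl]
      omega
  constructor
  · exact htot
  · intro k j j' hjj'
    rcases le_or_gt k N with hk | hk
    · rw [cnt_snoc_le _ _ hk, cnt_snoc_le _ _ hk]
      exact hw'.2 k j j' hjj'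
    · have h5 : ∀ l, cnt (Fin.snoc w' i) k l = a l := by
        intro l
        rw [cnt_ge _ (by omega : N + 1 ≤ k) l]
        exact htot l
      rw [h5 j, h5 j']
      exact ha hjj'

lemma card_ballot (N : ℕ) {m : ℕ} (a : Fin m → ℕ) (hs : ∑ i, a i = N) (ha : Antitone a) :
    (Nat.card {w : Fin N → Fin m // IsBallot a w} : ℚ)
      = N.factorial * Fm (fun i => (a i : ℤ)) := by
  induction N generalizing a with
  | zero =>
    have ha0 : ∀ i, a i = 0 := by
      intro i
      exact Finset.sum_eq_zero_iff.mp hs i (mem_univ i)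
    haveI : Unique {w : Fin 0 → Fin m // IsBallot a w} := by
      refine ⟨⟨⟨fun j => j.elim0, ?_, ?_⟩⟩, ?_⟩
      · intro i
        rw [ha0 i]
        simp [cnt]
      · intro k i i' _
        simp [cnt]
      · rintro ⟨w, hw⟩
        apply Subtype.ext
        funext j
        exact j.elim0
    rw [Nat.card_unique]
    have : (fun i : Fin m => ((a i : ℤ))) = (fun _ => (0:ℤ)) := by
      funext i; rw [ha0 i]; simp
    rw [this, Fm_zero]
    simp
  | succ N IH =>
    classical
    have hsplit : Nat.card {w : Fin (N+1) → Fin m // IsBallot a w}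
        = ∑ i : Fin m,
            Nat.card {w : {w : Fin (N+1) → Fin m // IsBallot a w} // w.1 (Fin.last N) = i} := by
      rw [← nat_card_sigma
        (fun i => {w : {w : Fin (N+1) → Fin m // IsBallot a w} // w.1 (Fin.last N) = i})]
      exact Nat.card_congr (Equiv.sigmaFiberEquiv _).symm
    have hfiber : ∀ i : Fin m,
        (Nat.card {w : {w : Fin (N+1) → Fin m // IsBallot a w} // w.1 (Fin.last N) = i} : ℚ)
          = N.factorial * Fm (fun j => ((a j : ℤ) - if j = i then 1 else 0)) := by
      intro i
      by_cases hai : a i = 0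
      · haveI : IsEmpty {w : {w : Fin (N+1) → Fin m // IsBallot a w} // w.1 (Fin.last N) = i} := by
          constructor
          rintro ⟨⟨w, hw⟩, hlast⟩
          have h0 : cnt w (N+1) i = 0 := by rw [hw.1 i, hai]
          unfold cnt at h0
          have h1 := Finset.sum_eq_zero_iff.mp h0 (Fin.last N) (mem_univ _)
          rw [if_pos ⟨by simp [Fin.val_last], hlast⟩] at h1
          omega
        rw [Nat.card_of_isEmpty]
        rcases Nat.lt_or_ge ((i : ℕ) + 1) m with hlt | hge
        · set i' : Fin m := ⟨(i : ℕ) + 1, hlt⟩ with hi'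
          have hii' : i ≤ i' := by rw [Fin.le_def]; simp [hi']
          have hai' : a i' = 0 := by
            have := ha hii'
            omega
          have hcol : Fm (fun j => ((a j : ℤ) - if j = i then 1 else 0)) = 0 := by
            apply Fm_collision _ (i := i) (j := i')
            · exact Fin.ne_of_val_ne (by simp [hi'])
            · rw [if_pos rfl, if_neg (by apply Fin.ne_of_val_ne; simp [hi'])]
              rw [hai, hai']
              simp [hi']
              ring
          rw [hcol]
          simp
        · have him : (i : ℕ) = m - 1 := by have := i.isLt; omega
          have hcol : Fm (fun j => ((a j : ℤ) - if j = i then 1 else 0)) = 0 := by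
            apply Fm_neg_entry _ i
            rw [if_pos rfl, hai]
            have hm : 1 ≤ m := by omega
            simp only [Nat.cast_zero]
            rw [him]
            push_cast [hm]
            ring_nf
            omega
          rw [hcol]
          simp
      · have hai1 : 1 ≤ a i := Nat.one_le_iff_ne_zero.mpr hai
        set a' : Fin m → ℕ := fun j => a j - if j = i then 1 else 0 with ha'
        have e : {w : {w : Fin (N+1) → Fin m // IsBallot a w} // w.1 (Fin.last N) = i}
            ≃ {w' : Fin N → Fin m // IsBallot a' w'} :=
          { toFun := fun p => ⟨Fin.init p.1.1, ballot_init p.1.2 p.2⟩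
            invFun := fun q => ⟨⟨Fin.snoc q.1 i, ballot_snoc ha hai1 q.2⟩, by simp⟩
            left_inv := by
              rintro ⟨⟨w, hw⟩, hlast⟩
              apply Subtype.ext
              apply Subtype.ext
              show Fin.snoc (Fin.init w) i = w
              rw [← hlast]
              exact Fin.snoc_init_self w
            right_inv := by
              rintro ⟨w', hw'⟩
              apply Subtype.ext
              simp }
        rw [Nat.card_congr e]
        by_cases hA : Antitone a'
        · have hsum' : ∑ j, a' j = N := by
            have h1 : (∑ j, a' j) + (∑ j : Fin m, if j = i then 1 else 0) = ∑ j, a j := by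
              rw [← Finset.sum_add_distrib]
              apply Finset.sum_congr rfl
              intro j _
              have hval : a' j = a j - if j = i then 1 else 0 := by rw [ha']
              by_cases hj : j = i
              · rw [hval, if_pos hj]
                subst hj
                omega
              · rw [hval, if_neg hj]
                omega
            have h2 : (∑ j : Fin m, if j = i then 1 else 0) = 1 := by
              simp
            omega
          rw [IH a' hsum' hA]
          congr 1
          apply congrArg
          funext j
          have hval : a' j = a j - if j = i then 1 else 0 := by rw [ha']
          by_cases hj : j = i
          · subst hj
            rw [hval, if_pos rfl, Nat.cast_sub hai1]
            simp
          · rw [hval, if_neg hj]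
            simp [hj]
        · unfold Antitone at hA
          push_neg at hA
          obtain ⟨x, y, hxy, hlt⟩ := hA
          have hxi : x = i := by
            by_contra hxi
            have e1 : a' x = a x := by rw [ha']; beta_reduce; rw [if_neg hxi]; omega
            have e2 : a' y ≤ a y := Nat.sub_le _ _
            have := ha hxy
            omega
          subst hxi
          have hyi : y ≠ x := by
            rintro rfl
            exact lt_irrefl _ hlt
          have hxy' : (x : ℕ) < (y : ℕ) := by
            rcases lt_or_eq_of_le hxy with h | h
            · exact h
            · exact absurd h.symm hyi
          have ha'x : a' x = a x - 1 := by rw [ha']; beta_reduce; rw [if_pos rfl]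
          have ha'y : a' y = a y := by
            rw [ha']; beta_reduce
            rw [if_neg (fun h => hyi h)]
            omega
          have hay : a y = a x := by
            have := ha hxy
            omega
          set i' : Fin m := ⟨(x : ℕ) + 1, by have := y.isLt; omega⟩ with hi'
          have hxi' : (x : ℕ) < (i' : ℕ) := by simp [hi']
          have hai' : a i' = a x := by
            have h1 : a i' ≤ a x := ha (by rw [Fin.le_def]; omega)
            have h2 : a y ≤ a i' := ha (by rw [Fin.le_def]; simp [hi']; omega)
            omega
          have hvi' : ((i' : Fin m) : ℕ) = (x : ℕ) + 1 := rfl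
          have hne : i' ≠ x := Fin.ne_of_val_ne (by omega)
          have hcol : Fm (fun j => ((a j : ℤ) - if j = x then 1 else 0)) = 0 := by
            apply Fm_collision _ (i := x) (j := i') hne.symm
            beta_reduce
            rw [if_pos rfl, if_neg hne, hai', hvi']
            push_cast
            ring
          haveI : IsEmpty {w' : Fin N → Fin m // IsBallot a' w'} := by
            constructor
            rintro ⟨w', hw'⟩
            have hb := hw'.2 N x i' (le_of_lt (by rw [Fin.lt_def]; omega))
            rw [hw'.1 x, hw'.1 i'] at hb
            have hx1 : a' x = a x - 1 := ha'x
            have hx2 : a' i' = a i' := by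
              rw [ha']; beta_reduce
              rw [if_neg hne]
              omega
            omega
          rw [Nat.card_of_isEmpty, hcol]
          simp
    rw [hsplit]
    push_cast
    rw [Finset.sum_congr rfl (fun i _ => hfiber i), ← Finset.mul_sum]
    have hZ : ∑ j, ((a j : ℤ)) = (N : ℤ) + 1 := by
      rw [← Nat.cast_sum, hs]
      push_cast
      ring
    rw [← Fm_rec (fun j => ((a j : ℤ))) N hZ]
    rw [Nat.factorial_succ]
    push_cast
    ring

lemma vd_prod (m : ℕ) :
    ∏ i : Fin m, ∏ j ∈ Ioi i, (((j : ℕ) : ℚ) - ((i : ℕ) : ℚ))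
      = ∏ j ∈ range m, (j.factorial : ℚ) := by
  have inner : ∀ i : Fin m, ∏ j ∈ Ioi i, (((j : ℕ) : ℚ) - ((i : ℕ) : ℚ))
      = ((m - 1 - (i : ℕ)).factorial : ℚ) := by
    intro i
    rw [← Finset.prod_range_add_one_eq_factorial]
    push_cast
    refine Finset.prod_bij' (fun (j : Fin m) (_ : j ∈ Ioi i) => (j : ℕ) - (i : ℕ) - 1)
      (fun (t : ℕ) (ht : t ∈ range (m - 1 - (i : ℕ))) => (⟨(i : ℕ) + 1 + t, by
        rw [mem_range] at ht; omega⟩ : Fin m)) ?_ ?_ ?_ ?_ ?_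
    · intro j hj; rw [mem_Ioi, Fin.lt_def] at hj; beta_reduce; rw [mem_range]; omega
    · intro t ht; rw [mem_range] at ht; beta_reduce; rw [mem_Ioi, Fin.lt_def]; simp; omega
    · intro j hj; rw [mem_Ioi, Fin.lt_def] at hj; apply Fin.ext; simp; omega
    · intro t ht; rw [mem_range] at ht; simp; omega
    · intro j hj; rw [mem_Ioi, Fin.lt_def] at hj
      have h2 : ((i : ℕ)) ≤ (j : ℕ) := le_of_lt hj
      have h5 : (1:ℕ) ≤ (j : ℕ) - (i : ℕ) := by omega
      beta_reduce
      rw [Nat.cast_sub h5, Nat.cast_sub h2]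
      push_cast
      ring
  rw [Finset.prod_congr rfl (fun i _ => inner i)]
  rw [Fin.prod_univ_eq_prod_range (fun i => ((m - 1 - i).factorial : ℚ)) m]
  exact Finset.prod_range_reflect (fun j => (j.factorial : ℚ)) m

lemma Fm_const_eval (m n : ℕ) :
    Fm (fun _ : Fin m => (n : ℤ)) * ∏ j ∈ range m, ((n + j).factorial : ℚ)
      = ∏ j ∈ range m, (j.factorial : ℚ) := by
  classical
  set A : Matrix (Fin m) (Fin m) ℚ := Matrix.of fun i j => gg ((n : ℤ) + (i : ℕ) - (j : ℕ)) with hA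
  have hFm : Fm (fun _ : Fin m => (n : ℤ)) = A.det := by
    rw [Matrix.det_apply']
    apply Finset.sum_congr rfl
    intro σ _
    congr 1
  have hB : ∀ i j : Fin m, ((n + (i : ℕ)).factorial : ℚ) * A i j
      = ((descPochhammer ℚ (j : ℕ)).eval (((n + (i : ℕ) : ℕ)) : ℚ)) := by
    intro i j
    rw [descPochhammer_eval_eq_descFactorial]
    rcases le_or_gt (j : ℕ) (n + (i : ℕ)) with h | h
    · have harg : (0:ℤ) ≤ (n : ℤ) + (i : ℕ) - (j : ℕ) := by omega
      have htn : ((n : ℤ) + (i : ℕ) - (j : ℕ)).toNat = n + (i : ℕ) - (j : ℕ) := by omega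
      rw [hA, Matrix.of_apply, gg, if_pos harg, htn]
      have key := Nat.factorial_mul_descFactorial h
      have : ((n + (i:ℕ) - (j:ℕ)).factorial : ℚ) * ((n + (i:ℕ)).descFactorial (j:ℕ) : ℚ)
          = ((n + (i:ℕ)).factorial : ℚ) := by exact_mod_cast congrArg (Nat.cast : ℕ → ℚ) key
      have hpos : ((n + (i:ℕ) - (j:ℕ)).factorial : ℚ) ≠ 0 := by positivity
      field_simp
      linarith [this]
    · have harg : (n : ℤ) + (i : ℕ) - (j : ℕ) < 0 := by omega
      rw [hA, Matrix.of_apply, gg_neg harg, Nat.descFactorial_of_lt h]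
      simp
  have hdetB : Matrix.det (Matrix.of fun i j : Fin m =>
        ((n + (i : ℕ)).factorial : ℚ) * A i j)
      = (∏ i : Fin m, ((n + (i : ℕ)).factorial : ℚ)) * A.det :=
    Matrix.det_mul_column _ A
  have hvdm : Matrix.det (Matrix.of fun i j : Fin m =>
        ((n + (i : ℕ)).factorial : ℚ) * A i j)
      = ∏ j ∈ range m, (j.factorial : ℚ) := by
    have h1 : (Matrix.of fun i j : Fin m => ((n + (i : ℕ)).factorial : ℚ) * A i j)
        = Matrix.of fun i j : Fin m =>
            ((descPochhammer ℚ (j : ℕ)).eval (((n + (i : ℕ) : ℕ)) : ℚ)) := by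
      ext i j
      exact hB i j
    rw [h1, ← Matrix.det_eval_matrixOfPolynomials_eq_det_vandermonde
      (fun i : Fin m => (((n + (i : ℕ) : ℕ)) : ℚ)) (fun j => descPochhammer ℚ (j : ℕ))
      (fun j => descPochhammer_natDegree (R := ℚ) (j : ℕ))
      (fun j => monic_descPochhammer ℚ (j : ℕ))]
    rw [Matrix.det_vandermonde]
    rw [← vd_prod m]
    apply Finset.prod_congr rfl
    intro i _
    apply Finset.prod_congr rfl
    intro j _
    push_cast
    ring
  rw [hFm]
  rw [← Fin.prod_univ_eq_prod_range (fun j => ((n + j).factorial : ℚ)) m]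
  rw [mul_comm, ← hdetB, hvdm]

lemma cnt_eq_card {N m : ℕ} (w : Fin N → Fin m) (k : ℕ) (i : Fin m) :
    cnt w k i = (univ.filter fun j : Fin N => (j : ℕ) < k ∧ w j = i).card := by
  rw [cnt, Finset.card_filter]

section OE
variable {M n' : ℕ} (s : Finset (Fin M)) (h : s.card = n')

lemma oe_card_lt (j : Fin n') :
    (s.filter fun y : Fin M => (y : ℕ) < ((s.orderEmbOfFin h j : Fin M) : ℕ)).card = (j : ℕ) := by
  classical
  set f := s.orderEmbOfFin h with hf
  have himg : s.filter (fun y : Fin M => (y : ℕ) < ((f j : Fin M) : ℕ))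
      = (univ.filter fun t : Fin n' => t < j).image (fun t => (f t : Fin M)) := by
    ext y
    simp only [mem_filter, mem_image, mem_univ, true_and]
    constructor
    · rintro ⟨hy, hlt⟩
      have : y ∈ Set.range (fun t => (f t : Fin M)) := by
        rw [Finset.range_orderEmbOfFin s h]
        exact hy
      obtain ⟨t, ht⟩ := this
      beta_reduce at ht
      refine ⟨t, ?_, ht⟩
      have : (f t : Fin M) < f j := by
        rw [Fin.lt_def, ht]
        exact hlt
      exact (s.orderEmbOfFin h).strictMono.lt_iff_lt.mp this
    · rintro ⟨t, htj, rfl⟩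
      refine ⟨Finset.orderEmbOfFin_mem s h t, ?_⟩
      have : (f t : Fin M) < f j := (s.orderEmbOfFin h).strictMono htj
      exact this
  rw [himg, Finset.card_image_of_injective _ (s.orderEmbOfFin h).injective]
  have : (univ.filter fun t : Fin n' => t < j) = Finset.Iio j := by
    ext t; simp [Finset.mem_Iio]
  rw [this, Fin.card_Iio]

lemma oe_lt_of_card_le (j : Fin n') {k : ℕ}
    (hk : (j : ℕ) + 1 ≤ (s.filter fun y : Fin M => (y : ℕ) < k).card) :
    ((s.orderEmbOfFin h j : Fin M) : ℕ) < k := by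
  by_contra hc
  push_neg at hc
  have hsub : s.filter (fun y : Fin M => (y : ℕ) < k)
      ⊆ s.filter (fun y : Fin M => (y : ℕ) < ((s.orderEmbOfFin h j : Fin M) : ℕ)) := by
    intro y hy
    rw [mem_filter] at hy ⊢
    exact ⟨hy.1, lt_of_lt_of_le hy.2 hc⟩
  have := Finset.card_le_card hsub
  rw [oe_card_lt s h j] at this
  omega

end OE

section Tab
variable {m n : ℕ}

/-- The row word of a bijective filling. -/
noncomputable def wrd (T : Fin m × Fin n → Fin (m * n)) (hT : Function.Bijective T) :
    Fin (m * n) → Fin m := fun k => ((Equiv.ofBijective T hT).symm k).1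

lemma wrd_apply (T : Fin m × Fin n → Fin (m * n)) (hT : Function.Bijective T)
    (p : Fin m × Fin n) : wrd T hT (T p) = p.1 := by
  unfold wrd
  have : (Equiv.ofBijective T hT).symm (T p) = p := (Equiv.ofBijective T hT).symm_apply_apply p
  rw [show T p = (Equiv.ofBijective T hT) p from rfl, Equiv.symm_apply_apply]

lemma cnt_wrd (T : Fin m × Fin n → Fin (m * n)) (hT : Function.Bijective T)
    (k : ℕ) (i : Fin m) :
    cnt (wrd T hT) k i = (univ.filter fun j : Fin n => ((T (i, j)) : ℕ) < k).card := by
  classical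
  rw [cnt_eq_card]
  apply Finset.card_bij' (fun (r : Fin (m * n)) (_ : r ∈ univ.filter fun r : Fin (m*n) =>
      (r : ℕ) < k ∧ wrd T hT r = i) => ((Equiv.ofBijective T hT).symm r).2)
    (fun (j : Fin n) (_ : j ∈ univ.filter fun j : Fin n => ((T (i, j)) : ℕ) < k) => T (i, j))
  · intro r hr
    rw [mem_filter] at hr ⊢
    obtain ⟨-, hrk, hri⟩ := hr
    refine ⟨mem_univ _, ?_⟩
    have hTr : T (i, ((Equiv.ofBijective T hT).symm r).2) = r := by
      have h1 : ((Equiv.ofBijective T hT).symm r) = (i, ((Equiv.ofBijective T hT).symm r).2) := by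
        apply Prod.ext
        · exact hri
        · rfl
      conv_lhs => rw [← h1]
      exact (Equiv.ofBijective T hT).apply_symm_apply r
    rw [hTr]
    exact hrk
  · intro j hj
    rw [mem_filter] at hj ⊢
    exact ⟨mem_univ _, hj.2, wrd_apply T hT (i, j)⟩
  · intro r hr
    rw [mem_filter] at hr
    obtain ⟨-, hrk, hri⟩ := hr
    beta_reduce
    have h1 : ((Equiv.ofBijective T hT).symm r) = (i, ((Equiv.ofBijective T hT).symm r).2) := by
      apply Prod.ext
      · exact hri
      · rfl
    conv_lhs => rw [← h1]
    exact (Equiv.ofBijective T hT).apply_symm_apply r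
  · intro j hj
    beta_reduce
    show ((Equiv.ofBijective T hT).symm (T (i, j))).2 = j
    rw [show T (i,j) = (Equiv.ofBijective T hT) (i,j) from rfl, Equiv.symm_apply_apply]

lemma ballot_wrd {T : Fin m × Fin n → Fin (m * n)} (hT : IsSYT T) :
    IsBallot (fun _ : Fin m => n) (wrd T hT.1) := by
  constructor
  · intro i
    rw [cnt_wrd T hT.1]
    have : (univ.filter fun j : Fin n => ((T (i, j)) : ℕ) < m * n) = univ := by
      apply Finset.filter_true_of_mem
      intro j _
      exact (T (i, j)).isLt
    rw [this]
    simp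
  · intro k i i' hii'
    rw [cnt_wrd T hT.1, cnt_wrd T hT.1]
    apply Finset.card_le_card
    intro j hj
    rw [mem_filter] at hj ⊢
    refine ⟨mem_univ _, ?_⟩
    rcases eq_or_lt_of_le hii' with rfl | hlt
    · exact hj.2
    · have := hT.2.2 (i, j) (i', j) rfl hlt
      rw [Fin.lt_def] at this
      omega

/-- the tableau associated to a ballot word. -/
noncomputable def tab (w : Fin (m * n) → Fin m) (hw : IsBallot (fun _ : Fin m => n) w) :
    Fin m × Fin n → Fin (m * n) := fun p =>
  (univ.filter fun k : Fin (m * n) => w k = p.1).orderEmbOfFin (by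
    have h1 := hw.1 p.1
    rw [cnt_eq_card] at h1
    rw [show (univ.filter fun k : Fin (m*n) => w k = p.1)
      = (univ.filter fun k : Fin (m*n) => (k : ℕ) < m * n ∧ w k = p.1) from by
        apply Finset.filter_congr; intro k _; simp [k.isLt]]
    exact h1) p.2

lemma fib_card (w : Fin (m * n) → Fin m) (hw : IsBallot (fun _ : Fin m => n) w) (i : Fin m) :
    (univ.filter fun k : Fin (m * n) => w k = i).card = n := by
  have h1 := hw.1 i
  rw [cnt_eq_card] at h1
  rw [show (univ.filter fun k : Fin (m*n) => w k = i)
    = (univ.filter fun k : Fin (m*n) => (k : ℕ) < m * n ∧ w k = i) from by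
      apply Finset.filter_congr; intro k _; simp [k.isLt]]
  exact h1

lemma w_tab (w : Fin (m * n) → Fin m) (hw : IsBallot (fun _ : Fin m => n) w)
    (p : Fin m × Fin n) : w (tab w hw p) = p.1 := by
  have := Finset.orderEmbOfFin_mem (univ.filter fun k : Fin (m * n) => w k = p.1) (by
    have h1 := hw.1 p.1
    rw [cnt_eq_card] at h1
    rw [show (univ.filter fun k : Fin (m*n) => w k = p.1)
      = (univ.filter fun k : Fin (m*n) => (k : ℕ) < m * n ∧ w k = p.1) from by
        apply Finset.filter_congr; intro k _; simp [k.isLt]]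
    exact h1) p.2
  rw [mem_filter] at this
  exact this.2

lemma tab_strictmono_row (w : Fin (m * n) → Fin m) (hw : IsBallot (fun _ : Fin m => n) w)
    (i : Fin m) {j j' : Fin n} (hjj' : j < j') : tab w hw (i, j) < tab w hw (i, j') := by
  unfold tab
  exact (Finset.orderEmbOfFin _ _).strictMono hjj'

lemma tab_col (w : Fin (m * n) → Fin m) (hw : IsBallot (fun _ : Fin m => n) w)
    {i i' : Fin m} (hii' : i < i') (j : Fin n) : tab w hw (i, j) < tab w hw (i', j) := by
  classical
  set x := tab w hw (i', j) with hx
  set k := (x : ℕ) with hk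
  have hfib : ∀ l : Fin m, (univ.filter fun r : Fin (m * n) => w r = l).card = n :=
    fib_card w hw
  have hxmem : x ∈ univ.filter fun r : Fin (m * n) => w r = i' := by
    rw [mem_filter]
    exact ⟨mem_univ _, w_tab w hw (i', j)⟩
  have hwx : w x = i' := (mem_filter.mp hxmem).2
  -- elements of fiber i' strictly below x number exactly j
  have hk1 : ((univ.filter fun r : Fin (m * n) => w r = i').filter
      fun y : Fin (m * n) => (y : ℕ) < k).card = (j : ℕ) := oe_card_lt _ _ j
  -- elements of fiber i' below x inclusive number j+1
  have hk2 : ((univ.filter fun r : Fin (m * n) => w r = i').filter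
      fun y : Fin (m * n) => (y : ℕ) < k + 1).card = (j : ℕ) + 1 := by
    have hins : (univ.filter fun r : Fin (m * n) => w r = i').filter
        (fun y : Fin (m * n) => (y : ℕ) < k + 1)
        = insert x ((univ.filter fun r : Fin (m * n) => w r = i').filter
            fun y : Fin (m * n) => (y : ℕ) < k) := by
      ext y
      simp only [Finset.mem_insert, Finset.mem_filter, Finset.mem_univ, true_and]
      constructor
      · rintro ⟨hy, hyk⟩
        rcases Nat.lt_or_ge (y : ℕ) k with h | h
        · exact Or.inr ⟨hy, h⟩
        · left
          apply Fin.ext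
          omega
      · rintro (rfl | ⟨hy, hyk⟩)
        · exact ⟨hwx, by omega⟩
        · exact ⟨hy, by omega⟩
    rw [hins, Finset.card_insert_of_notMem (by
      simp only [Finset.mem_filter, Finset.mem_univ, true_and]
      rintro ⟨-, hc⟩
      omega), hk1]
  have hcnt2 : cnt w (k + 1) i' = (j : ℕ) + 1 := by
    rw [cnt_eq_card, ← hk2, Finset.filter_filter]
    congr 1
    apply Finset.filter_congr
    intro r _
    tauto
  have hcnt3 : (j : ℕ) + 1 ≤ cnt w (k + 1) i := by
    rw [← hcnt2]
    exact hw.2 (k + 1) i i' (le_of_lt hii')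
  have hcnt4 : cnt w k i = cnt w (k + 1) i := by
    rw [cnt_eq_card, cnt_eq_card]
    congr 1
    ext r
    rw [mem_filter, mem_filter]
    constructor
    · rintro ⟨hu, hrk, hri⟩
      exact ⟨hu, by omega, hri⟩
    · rintro ⟨hu, hrk, hri⟩
      refine ⟨hu, ?_, hri⟩
      rcases Nat.lt_or_ge (r : ℕ) k with h | h
      · exact h
      · exfalso
        have : r = x := Fin.ext (by omega)
        subst this
        rw [hwx] at hri
        exact absurd hri.symm (ne_of_lt hii')
  have hcnt5 : (j : ℕ) + 1 ≤ ((univ.filter fun r : Fin (m * n) => w r = i).filter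
      fun y : Fin (m * n) => (y : ℕ) < k).card := by
    have : cnt w k i = ((univ.filter fun r : Fin (m * n) => w r = i).filter
        fun y : Fin (m * n) => (y : ℕ) < k).card := by
      rw [cnt_eq_card, Finset.filter_filter]
      congr 1
      apply Finset.filter_congr
      intro r _
      tauto
    omega
  have := oe_lt_of_card_le (univ.filter fun r : Fin (m * n) => w r = i) (hfib i) j hcnt5
  rw [Fin.lt_def]
  exact this

lemma tab_SYT (w : Fin (m * n) → Fin m) (hw : IsBallot (fun _ : Fin m => n) w) :
    IsSYT (tab w hw) := by
  have hinj : Function.Injective (tab w hw) := by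
    rintro ⟨i, j⟩ ⟨i', j'⟩ hE
    have h1 : i = i' := by
      have := w_tab w hw (i, j)
      rw [hE, w_tab w hw (i', j')] at this
      exact this.symm
    subst h1
    have h2 : j = j' := by
      rcases lt_trichotomy j j' with h | h | h
      · exact absurd hE (ne_of_lt (tab_strictmono_row w hw i h))
      · exact h
      · exact absurd hE.symm (ne_of_lt (tab_strictmono_row w hw i h))
    rw [h2]
  refine ⟨?_, ?_, ?_⟩
  · rw [Fintype.bijective_iff_injective_and_card]
    exact ⟨hinj, by simp⟩
  · rintro ⟨i, j⟩ ⟨i', j'⟩ h1 h2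
    simp only at h1 h2
    subst h1
    exact tab_strictmono_row w hw i h2
  · rintro ⟨i, j⟩ ⟨i', j'⟩ h1 h2
    simp only at h1 h2
    subst h1
    exact tab_col w hw h2 j

lemma wrd_tab (w : Fin (m * n) → Fin m) (hw : IsBallot (fun _ : Fin m => n) w) :
    wrd (tab w hw) (tab_SYT w hw).1 = w := by
  funext k
  set e := Equiv.ofBijective (tab w hw) (tab_SYT w hw).1 with he
  have h1 : tab w hw (e.symm k) = k := e.apply_symm_apply k
  have h2 : wrd (tab w hw) (tab_SYT w hw).1 k = (e.symm k).1 := rfl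
  rw [h2, ← w_tab w hw (e.symm k), h1]

lemma tab_wrd (T : Fin m × Fin n → Fin (m * n)) (hT : IsSYT T) :
    tab (wrd T hT.1) (ballot_wrd hT) = T := by
  funext p
  obtain ⟨i, j⟩ := p
  have hcard : (univ.filter fun k : Fin (m * n) => wrd T hT.1 k = i).card = n :=
    fib_card _ (ballot_wrd hT) i
  have hmem : ∀ j' : Fin n, T (i, j') ∈ univ.filter fun k : Fin (m * n) => wrd T hT.1 k = i := by
    intro j'
    rw [mem_filter]
    exact ⟨mem_univ _, wrd_apply T hT.1 (i, j')⟩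
  have hmono : StrictMono (fun j' : Fin n => T (i, j')) := by
    intro j1 j2 h12
    exact hT.2.1 (i, j1) (i, j2) rfl h12
  have huniq := Finset.orderEmbOfFin_unique hcard hmem hmono
  have : tab (wrd T hT.1) (ballot_wrd hT) (i, j)
      = (univ.filter fun k : Fin (m * n) => wrd T hT.1 k = i).orderEmbOfFin hcard j := by
    unfold tab
    congr 1
  rw [this, ← huniq]

/-- The bijection between rectangular SYT and ballot words. -/
noncomputable def sytEquivBallot :
    {T : Fin m × Fin n → Fin (m * n) // IsSYT T}
      ≃ {w : Fin (m * n) → Fin m // IsBallot (fun _ : Fin m => n) w} where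
  toFun := fun p => ⟨wrd p.1 p.2.1, ballot_wrd p.2⟩
  invFun := fun q => ⟨tab q.1 q.2, tab_SYT q.1 q.2⟩
  left_inv := by
    rintro ⟨T, hT⟩
    apply Subtype.ext
    exact tab_wrd T hT
  right_inv := by
    rintro ⟨w, hw⟩
    apply Subtype.ext
    exact wrd_tab w hw

end Tab

theorem card_mxn_SYT (m n : ℕ) :
    SYTcard m n * ∏ j ∈ Finset.range m, (n + j).factorial =
      (m * n).factorial * ∏ j ∈ Finset.range m, j.factorial := by
  have h1 : SYTcard m n
      = Nat.card {w : Fin (m * n) → Fin m // IsBallot (fun _ : Fin m => n) w} :=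
    Nat.card_congr sytEquivBallot
  have hsum : ∑ _i : Fin m, n = m * n := by
    simp [Finset.sum_const, Finset.card_univ, mul_comm]
  have hanti : Antitone (fun _ : Fin m => n) := antitone_const
  have h2 := card_ballot (m * n) (fun _ : Fin m => n) hsum hanti
  beta_reduce at h2
  have key : ((SYTcard m n : ℚ)) * ∏ j ∈ Finset.range m, ((n + j).factorial : ℚ)
      = (((m * n).factorial : ℚ)) * ∏ j ∈ Finset.range m, (j.factorial : ℚ) := by
    rw [h1, h2, mul_assoc, Fm_const_eval m n]
  exact_mod_cast key
end

section
/- An arrangement of r hyperplanes in ℝ^d partitions ℝ^d into at most ∑_{i=0}^{d} binomial(r, i) regions (connected components of the complement of the union of the hyperplanes). -/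
open Finset Module

private lemma pascal_sum (r : ℕ) : ∀ n : ℕ,
    ∑ i ∈ Finset.range (n + 1), (r + 1).choose i =
      ∑ i ∈ Finset.range (n + 1), r.choose i + ∑ i ∈ Finset.range n, r.choose i := by
  intro n
  induction n with
  | zero => simp
  | succ m ih =>
    rw [Finset.sum_range_succ, ih, Finset.sum_range_succ (f := fun i => r.choose i) (n := m + 1),
      Finset.sum_range_succ (f := fun i => r.choose i) (n := m), Nat.choose_succ_succ]
    ring

/-- Abstract counting step: if every `P`-vector restricts to a `Q`-vector, and whenever two
`P`-vectors differing only in the last coordinate exist their common restriction is an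
`R`-vector, then `#P ≤ #Q + #R`. -/
private lemma step_count {r : ℕ} (P : (Fin (r + 1) → Bool) → Prop)
    (Q R : (Fin r → Bool) → Prop)
    (hPQ : ∀ σ, P σ → Q (Fin.init σ))
    (hPR : ∀ σt σf, P σt → P σf → σt (Fin.last r) = true → σf (Fin.last r) = false →
      Fin.init σt = Fin.init σf → R (Fin.init σt)) :
    Nat.card {σ // P σ} ≤ Nat.card {τ // Q τ} + Nat.card {τ // R τ} := by
  classical
  rw [Nat.card_eq_fintype_card, Nat.card_eq_fintype_card, Nat.card_eq_fintype_card,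
    Fintype.card_subtype, Fintype.card_subtype, Fintype.card_subtype]
  set A := Finset.univ.filter P with hA
  set At := A.filter (fun σ => σ (Fin.last r) = true) with hAt
  set Af := A.filter (fun σ => ¬ (σ (Fin.last r) = true)) with hAf
  have hpart : At.card + Af.card = A.card :=
    Finset.card_filter_add_card_filter_not _
  have hinj : ∀ v : Bool, ∀ σ ∈ A.filter (fun σ => σ (Fin.last r) = v),
      ∀ σ' ∈ A.filter (fun σ => σ (Fin.last r) = v),
      Fin.init σ = Fin.init σ' → σ = σ' := by
    intro v σ hσ σ' hσ' h
    have h1 : σ (Fin.last r) = v := (Finset.mem_filter.1 hσ).2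
    have h2 : σ' (Fin.last r) = v := (Finset.mem_filter.1 hσ').2
    calc σ = Fin.snoc (Fin.init σ) (σ (Fin.last r)) := (Fin.snoc_init_self σ).symm
      _ = Fin.snoc (Fin.init σ') (σ' (Fin.last r)) := by rw [h, h1, h2]
      _ = σ' := Fin.snoc_init_self σ'
  have hAf' : Af = A.filter (fun σ => σ (Fin.last r) = false) := by
    simp [hAf, Bool.not_eq_true]
  set Bt := At.image Fin.init with hBt
  set Bf := Af.image Fin.init with hBf
  have hct : Bt.card = At.card := Finset.card_image_of_injOn
    (fun σ hσ σ' hσ' h => hinj true σ (Finset.mem_coe.1 hσ) σ' (Finset.mem_coe.1 hσ') h)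
  have hcf : Bf.card = Af.card := by
    rw [hBf, hAf']
    exact Finset.card_image_of_injOn
      (fun σ hσ σ' hσ' h => hinj false σ (Finset.mem_coe.1 hσ) σ' (Finset.mem_coe.1 hσ') h)
  have hBQ : Bt ∪ Bf ⊆ Finset.univ.filter Q := by
    intro τ hτ
    simp only [Finset.mem_union, hBt, hBf, Finset.mem_image] at hτ
    obtain ⟨σ, hσ, rfl⟩ | ⟨σ, hσ, rfl⟩ := hτ <;>
    · have hσA : σ ∈ A := (Finset.mem_filter.1 hσ).1
      exact Finset.mem_filter.2 ⟨Finset.mem_univ _, hPQ σ (Finset.mem_filter.1 hσA).2⟩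
  have hBR : Bt ∩ Bf ⊆ Finset.univ.filter R := by
    intro τ hτ
    simp only [Finset.mem_inter, hBt, hBf, Finset.mem_image] at hτ
    obtain ⟨⟨σt, hσt, hτt⟩, ⟨σf, hσf, hτf⟩⟩ := hτ
    have h1 := Finset.mem_filter.1 hσt
    have h2 := Finset.mem_filter.1 hσf
    have h3 : σf (Fin.last r) = false := by simpa using h2.2
    refine Finset.mem_filter.2 ⟨Finset.mem_univ _, ?_⟩
    have := hPR σt σf (Finset.mem_filter.1 h1.1).2 (Finset.mem_filter.1 h2.1).2 h1.2 h3
      (hτt.trans hτf.symm)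
    rwa [hτt] at this
  calc A.card = At.card + Af.card := hpart.symm
    _ = Bt.card + Bf.card := by rw [hct, hcf]
    _ = (Bt ∪ Bf).card + (Bt ∩ Bf).card := (Finset.card_union_add_card_inter Bt Bf).symm
    _ ≤ (Finset.univ.filter Q).card + (Finset.univ.filter R).card :=
      Nat.add_le_add (Finset.card_le_card hBQ) (Finset.card_le_card hBR)

/-- Key combinatorial lemma: the number of realized nowhere-zero sign vectors of `r`
affine functionals on a space of dimension `≤ n` is at most `∑_{i≤n} C(r,i)`. -/
private lemma signbound : ∀ (r n : ℕ) (V : Type) [AddCommGroup V] [Module ℝ V]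
    [FiniteDimensional ℝ V], finrank ℝ V ≤ n →
    ∀ (φ : Fin r → (V →ₗ[ℝ] ℝ)) (b : Fin r → ℝ),
    Nat.card {σ : Fin r → Bool // ∃ x, ∀ i, φ i x ≠ b i ∧ σ i = decide (b i < φ i x)} ≤
      ∑ i ∈ Finset.range (n + 1), r.choose i := by
  intro r
  induction r with
  | zero =>
    intro n V _ _ _ hV φ b
    have h1 : Nat.card {σ : Fin 0 → Bool // ∃ x, ∀ i, φ i x ≠ b i ∧ σ i = decide (b i < φ i x)} ≤
        Nat.card (Fin 0 → Bool) := Nat.card_le_card_of_injective _ Subtype.val_injective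
    have h2 : Nat.card (Fin 0 → Bool) = 1 := by simp [Nat.card_eq_fintype_card]
    calc _ ≤ 1 := h1.trans h2.le
      _ ≤ _ := by
        rw [Finset.sum_range_succ']
        simp
  | succ r IH =>
    intro n V _ _ _ hV φ b
    classical
    by_cases hφ : φ (Fin.last r) = 0
    · by_cases hb : b (Fin.last r) = 0
      · have : IsEmpty {σ : Fin (r+1) → Bool //
            ∃ x, ∀ i, φ i x ≠ b i ∧ σ i = decide (b i < φ i x)} := by
          constructor
          rintro ⟨σ, x, hx⟩
          exact (hx (Fin.last r)).1 (by rw [hφ, hb]; simp)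
        rw [Nat.card_of_isEmpty]
        exact Nat.zero_le _
      · -- last functional is 0 but constant b is nonzero: last sign is forced
        set F : {σ : Fin (r+1) → Bool // ∃ x, ∀ i, φ i x ≠ b i ∧ σ i = decide (b i < φ i x)} →
            {τ : Fin r → Bool // ∃ x, ∀ i : Fin r,
              φ i.castSucc x ≠ b i.castSucc ∧ τ i = decide (b i.castSucc < φ i.castSucc x)} :=
          fun σ => ⟨Fin.init σ.1, by
            obtain ⟨x, hx⟩ := σ.2
            exact ⟨x, fun i => hx i.castSucc⟩⟩ with hF
        have hFinj : Function.Injective F := by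
          rintro ⟨σ, x, hx⟩ ⟨σ', x', hx'⟩ h
          simp only [hF, Subtype.mk_eq_mk] at h ⊢
          have h1 : σ (Fin.last r) = decide (b (Fin.last r) < 0) := by
            have := (hx (Fin.last r)).2; rwa [hφ] at this
          have h2 : σ' (Fin.last r) = decide (b (Fin.last r) < 0) := by
            have := (hx' (Fin.last r)).2; rwa [hφ] at this
          calc σ = Fin.snoc (Fin.init σ) (σ (Fin.last r)) := (Fin.snoc_init_self σ).symm
            _ = Fin.snoc (Fin.init σ') (σ' (Fin.last r)) := by rw [h, h1, h2]
            _ = σ' := Fin.snoc_init_self σ'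
        calc _ ≤ _ := Nat.card_le_card_of_injective F hFinj
          _ ≤ ∑ i ∈ Finset.range (n + 1), r.choose i := IH n V hV _ _
          _ ≤ _ := Finset.sum_le_sum fun i _ => Nat.choose_le_choose i (Nat.le_succ r)
    · -- main case: last functional nonzero
      have hn : 1 ≤ n := by
        by_contra h
        have h0 : finrank ℝ V = 0 := by omega
        have : Subsingleton V := (Module.finrank_zero_iff (R := ℝ)).1 h0
        exact hφ (by ext x; rw [Subsingleton.elim x 0]; simp)
      obtain ⟨m, rfl⟩ : ∃ m, n = m + 1 := ⟨n - 1, by omega⟩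
      obtain ⟨y, hy⟩ : ∃ y, φ (Fin.last r) y ≠ 0 := by
        by_contra h
        push_neg at h
        exact hφ (LinearMap.ext h)
      obtain ⟨x₀, hx₀⟩ : ∃ x₀, φ (Fin.last r) x₀ = b (Fin.last r) :=
        ⟨(b (Fin.last r) / φ (Fin.last r) y) • y, by
          simp only [map_smul, smul_eq_mul]; field_simp⟩
      have hWrank : finrank ℝ (LinearMap.ker (φ (Fin.last r))) ≤ m := by
        have h1 := LinearMap.finrank_range_add_finrank_ker (φ (Fin.last r))
        have h2 : LinearMap.range (φ (Fin.last r)) = ⊤ :=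
          LinearMap.range_eq_top.2 (fun z => ⟨(z / φ (Fin.last r) y) • y, by
            simp only [map_smul, smul_eq_mul]; field_simp⟩)
        rw [h2] at h1
        simp only [finrank_top, finrank_self] at h1
        omega
      have main := step_count
        (fun σ => ∃ x, ∀ i, φ i x ≠ b i ∧ σ i = decide (b i < φ i x))
        (fun τ => ∃ x, ∀ i : Fin r,
          φ i.castSucc x ≠ b i.castSucc ∧ τ i = decide (b i.castSucc < φ i.castSucc x))
        (fun τ => ∃ w : LinearMap.ker (φ (Fin.last r)), ∀ i : Fin r,
          (φ i.castSucc).domRestrict _ w ≠ b i.castSucc - φ i.castSucc x₀ ∧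
            τ i = decide (b i.castSucc - φ i.castSucc x₀ < (φ i.castSucc).domRestrict _ w))
        (by
          rintro σ ⟨x, hx⟩
          exact ⟨x, fun i => hx i.castSucc⟩)
        (by
          rintro σt σf ⟨xp, hxp⟩ ⟨xm, hxm⟩ hlt hlf hττ
          have hp : b (Fin.last r) < φ (Fin.last r) xp := by
            have := (hxp (Fin.last r)).2; rw [hlt] at this
            exact of_decide_eq_true this.symm
          have hm : φ (Fin.last r) xm < b (Fin.last r) := by
            have h1 := (hxm (Fin.last r)).2; rw [hlf] at h1
            exact lt_of_le_of_ne (not_lt.1 (of_decide_eq_false h1.symm)) (hxm (Fin.last r)).1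
          set D : ℝ := φ (Fin.last r) xp - φ (Fin.last r) xm with hD
          have hDpos : 0 < D := by simp only [hD, sub_pos]; linarith
          set t : ℝ := (b (Fin.last r) - φ (Fin.last r) xm) / D with ht
          have ht0 : 0 < t := div_pos (by linarith) hDpos
          have ht1 : t < 1 := by rw [ht, div_lt_one hDpos, hD]; linarith
          set xt : V := xm + t • (xp - xm) with hxt
          have hlast : φ (Fin.last r) xt = b (Fin.last r) := by
            simp only [hxt, map_add, map_smul, map_sub, smul_eq_mul, ht, hD]
            rw [div_mul_cancel₀ _ (sub_pos.2 (hm.trans hp)).ne']; ring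
          have hmem : xt - x₀ ∈ LinearMap.ker (φ (Fin.last r)) := by
            simp only [LinearMap.mem_ker, map_sub, hlast, hx₀, sub_self]
          have hval : ∀ i : Fin r,
              φ i.castSucc xt = (1 - t) * φ i.castSucc xm + t * φ i.castSucc xp := by
            intro i
            simp only [hxt, map_add, map_smul, map_sub, smul_eq_mul]
            ring
          refine ⟨⟨xt - x₀, hmem⟩, fun i => ?_⟩
          have hψv : (φ i.castSucc).domRestrict (LinearMap.ker (φ (Fin.last r)))
              (⟨xt - x₀, hmem⟩ : LinearMap.ker (φ (Fin.last r)))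
              = φ i.castSucc xt - φ i.castSucc x₀ := by
            simp [LinearMap.domRestrict_apply, map_sub]
          have hne : φ i.castSucc xt ≠ b i.castSucc ∧
              Fin.init σt i = decide (b i.castSucc < φ i.castSucc xt) := by
            have hτfi : σf i.castSucc = Fin.init σt i := by rw [hττ]; rfl
            cases hv : Fin.init σt i with
            | true =>
              have hpi : b i.castSucc < φ i.castSucc xp := by
                have := (hxp i.castSucc).2
                rw [show σt i.castSucc = Fin.init σt i from rfl, hv] at this
                exact of_decide_eq_true this.symm
              have hmi : b i.castSucc < φ i.castSucc xm := by
                have := (hxm i.castSucc).2; rw [hτfi, hv] at this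
                exact of_decide_eq_true this.symm
              have hgt : b i.castSucc < φ i.castSucc xt := by
                rw [hval i]; nlinarith
              exact ⟨ne_of_gt hgt, by simp [hgt]⟩
            | false =>
              have hpi : φ i.castSucc xp < b i.castSucc := by
                have h1 := (hxp i.castSucc).2
                rw [show σt i.castSucc = Fin.init σt i from rfl, hv] at h1
                exact lt_of_le_of_ne (not_lt.1 (of_decide_eq_false h1.symm)) (hxp i.castSucc).1
              have hmi : φ i.castSucc xm < b i.castSucc := by
                have h1 := (hxm i.castSucc).2; rw [hτfi, hv] at h1
                exact lt_of_le_of_ne (not_lt.1 (of_decide_eq_false h1.symm)) (hxm i.castSucc).1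
              have hlt2 : φ i.castSucc xt < b i.castSucc := by
                rw [hval i]; nlinarith
              exact ⟨ne_of_lt hlt2, by simp [not_lt.2 hlt2.le]⟩
          refine ⟨?_, ?_⟩
          · rw [hψv]
            intro h
            exact hne.1 (by linarith)
          · rw [hne.2, hψv]
            exact (decide_eq_decide.2 (sub_lt_sub_iff_right (φ i.castSucc x₀)).symm)
          )
      calc _ ≤ _ := main
        _ ≤ ∑ i ∈ Finset.range (m + 2), r.choose i
            + ∑ i ∈ Finset.range (m + 1), r.choose i :=
          Nat.add_le_add (IH (m + 1) V hV _ _) (IH m _ hWrank _ _)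
        _ = ∑ i ∈ Finset.range (m + 2), (r + 1).choose i := (pascal_sum r (m + 1)).symm

theorem hyperplane_arrangement_region_bound (d r : ℕ)
    (a : Fin r → EuclideanSpace ℝ (Fin d)) (b : Fin r → ℝ) (ha : ∀ i, a i ≠ 0) :
    Nat.card (ConnectedComponents
        {x : EuclideanSpace ℝ (Fin d) // ∀ i : Fin r, inner ℝ (a i) x ≠ b i}) ≤
      ∑ i ∈ Finset.range (d + 1), r.choose i := by
  classical
  have hlin : ∀ i : Fin r, IsLinearMap ℝ (fun z : EuclideanSpace ℝ (Fin d) => (inner ℝ (a i) z : ℝ)) := fun i =>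
    ⟨fun x y => inner_add_right _ _ _, fun c x => real_inner_smul_right _ _ _⟩
  set φ : Fin r → ((EuclideanSpace ℝ (Fin d)) →ₗ[ℝ] ℝ) := fun i => IsLinearMap.mk' _ (hlin i) with hφ
  have hφa : ∀ (i : Fin r) (z : EuclideanSpace ℝ (Fin d)), φ i z = inner ℝ (a i) z := fun i z => rfl
  set S := {x : EuclideanSpace ℝ (Fin d) // ∀ i : Fin r, inner ℝ (a i) x ≠ b i} with hS
  set g : S → (Fin r → Bool) := fun x i => decide (b i < inner ℝ (a i) x.1) with hg
  set U : (Fin r → Bool) → Set (EuclideanSpace ℝ (Fin d)) := fun σ =>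
    {z | ∀ i, if σ i then b i < inner ℝ (a i) z else inner ℝ (a i) z < b i} with hU
  have hUset : ∀ σ, U σ = ⋂ i : Fin r,
      (if σ i then {z : EuclideanSpace ℝ (Fin d) | b i < inner ℝ (a i) z} else {z : EuclideanSpace ℝ (Fin d) | inner ℝ (a i) z < b i}) := by
    intro σ
    ext z
    simp only [hU, Set.mem_setOf_eq, Set.mem_iInter]
    refine forall_congr' fun i => ?_
    by_cases h : σ i <;> simp [h]
  have hUconv : ∀ σ, Convex ℝ (U σ) := by
    intro σ
    rw [hUset]
    refine convex_iInter fun i => ?_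
    by_cases h : σ i <;> simp only [h, if_true, if_false, Bool.false_eq_true]
    · exact convex_halfSpace_gt (hlin i) _
    · exact convex_halfSpace_lt (hlin i) _
  have hUopen : ∀ σ, IsOpen (U σ) := by
    intro σ
    rw [hUset]
    refine isOpen_iInter_of_finite fun i => ?_
    have hc : Continuous (fun z : EuclideanSpace ℝ (Fin d) => (inner ℝ (a i) z : ℝ)) :=
      Continuous.inner continuous_const continuous_id
    by_cases h : σ i <;> simp only [h, if_true, if_false, Bool.false_eq_true]
    · exact isOpen_lt continuous_const hc
    · exact isOpen_lt hc continuous_const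
  have hUsub : ∀ σ, U σ ⊆ {x : EuclideanSpace ℝ (Fin d) | ∀ i : Fin r, inner ℝ (a i) x ≠ b i} := by
    intro σ z hz i
    have := hz i
    by_cases h : σ i <;> simp only [h, if_true, if_false, Bool.false_eq_true] at this
    · exact ne_of_gt this
    · exact ne_of_lt this
  have hfiber : ∀ σ, (g ⁻¹' {σ}) = Subtype.val ⁻¹' (U σ) := by
    intro σ
    ext x
    simp only [Set.mem_preimage, Set.mem_singleton_iff, funext_iff, hg, hU, Set.mem_setOf_eq]
    constructor
    · intro h i
      have hi := h i
      cases hv : σ i with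
      | true =>
        rw [hv] at hi
        simp only [if_true]
        exact of_decide_eq_true hi
      | false =>
        rw [hv] at hi
        simp only [Bool.false_eq_true, if_false]
        exact lt_of_le_of_ne (not_lt.1 (of_decide_eq_false hi)) (x.2 i)
    · intro h i
      have hi := h i
      cases hv : σ i with
      | true =>
        rw [hv] at hi
        simp only [if_true] at hi
        exact decide_eq_true hi
      | false =>
        rw [hv] at hi
        simp only [Bool.false_eq_true, if_false] at hi
        exact decide_eq_false (not_lt.2 hi.le)
  have hgc : Continuous g := by
    refine IsLocallyConstant.continuous ?_
    rw [IsLocallyConstant.iff_isOpen_fiber]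
    intro σ
    rw [hfiber σ]
    exact (hUopen σ).preimage continuous_subtype_val
  set G : ConnectedComponents S →
      {σ : Fin r → Bool // ∃ x, ∀ i, φ i x ≠ b i ∧ σ i = decide (b i < φ i x)} :=
    fun c => ⟨hgc.connectedComponentsLift c, by
      obtain ⟨x, rfl⟩ := ConnectedComponents.surjective_coe c
      exact ⟨x.1, fun i => ⟨x.2 i, rfl⟩⟩⟩ with hG
  have hGinj : Function.Injective G := by
    intro c1 c2 h
    obtain ⟨x, rfl⟩ := ConnectedComponents.surjective_coe c1
    obtain ⟨y, rfl⟩ := ConnectedComponents.surjective_coe c2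
    have hgxy : g x = g y := by
      have := congrArg Subtype.val h
      simpa [hG] using this
    have hx : x ∈ g ⁻¹' {g x} := rfl
    have hy : y ∈ g ⁻¹' {g x} := by
      simp only [Set.mem_preimage, Set.mem_singleton_iff, hgxy]
    have hpre : IsPreconnected (g ⁻¹' {g x}) := by
      rw [hfiber]
      refine (Topology.IsInducing.isPreconnected_image (Topology.IsInducing.subtypeVal)).1 ?_
      convert (hUconv (g x)).isPreconnected using 1
      ext z
      constructor
      · rintro ⟨w, hw, rfl⟩; exact hw
      · intro hz; exact ⟨⟨z, hUsub _ hz⟩, hz, rfl⟩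
    have hycomp : y ∈ connectedComponent x :=
      IsPreconnected.subset_connectedComponent hpre hx hy
    exact ConnectedComponents.coe_eq_coe.2 (connectedComponent_eq hycomp)
  have hfin : finrank ℝ (EuclideanSpace ℝ (Fin d)) ≤ d := by
    rw [finrank_euclideanSpace_fin]
  calc Nat.card (ConnectedComponents S)
      ≤ Nat.card {σ : Fin r → Bool // ∃ x, ∀ i, φ i x ≠ b i ∧ σ i = decide (b i < φ i x)} :=
        Nat.card_le_card_of_injective G hGinj
    _ ≤ ∑ i ∈ Finset.range (d + 1), r.choose i := signbound r d (EuclideanSpace ℝ (Fin d)) hfin φ b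
end

section
/- Let x ∈ ℝ^{m-1} and y ∈ ℝ^n be increasing vectors such that all differences y_i - y_j for i > j are distinct and distinct from all differences x_k - x_ℓ, and such that all entries of the outer sum x ∘ y are distinct. Then the set of total orders on [m]×[n] arising as the order of entries of x' ∘ y, where x' = (x_1,...,x_{m-1}, x_m) ranges over all choices of x_m > x_{m-1} making entries of x' ∘ y distinct, has cardinality at least binomial(n,2) + 1. -/
theorem single_row_extensions_lower_bound (m n : ℕ) (hm : 1 ≤ m)
    (x : Fin m → ℝ) (y : Fin n → ℝ) (hx : StrictMono x) (hy : StrictMono y)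
    (hydist : ∀ i j k l : Fin n, j < i → l < k → (i, j) ≠ (k, l) →
      y i - y j ≠ y k - y l)
    (hxydist : ∀ i j : Fin n, ∀ k l : Fin m, j < i → y i - y j ≠ x k - x l)
    (hinj : Function.Injective (fun p : Fin m × Fin n => x p.1 + y p.2)) :
    n.choose 2 + 1 ≤
      {R : (Fin (m + 1) × Fin n) → (Fin (m + 1) × Fin n) → Prop |
        ∃ t : ℝ, x ⟨m - 1, by omega⟩ < t ∧
          Function.Injective (fun p : Fin (m + 1) × Fin n =>
            (Fin.snoc x t : Fin (m + 1) → ℝ) p.1 + y p.2) ∧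
          R = fun p q : Fin (m + 1) × Fin n =>
            (Fin.snoc x t : Fin (m + 1) → ℝ) p.1 + y p.2 <
              (Fin.snoc x t : Fin (m + 1) → ℝ) q.1 + y q.2}.ncard := by
  classical
  set N := n.choose 2 with hN
  set P : Finset (Fin n × Fin n) := Finset.univ.filter (fun p => p.2 < p.1) with hP
  have hPcard : P.card = N := by
    have h1 : P.card = ∑ i : Fin n, (P.filter (fun p => p.1 = i)).card :=
      Finset.card_eq_sum_card_fiberwise (by intro p _; exact Finset.mem_univ _)
    have h2 : ∀ i : Fin n, (P.filter (fun p => p.1 = i)).card = (i : ℕ) := by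
      intro i
      rw [← Fin.card_Iio (b := i)]
      apply Finset.card_bij (fun p _ => p.2)
      · rintro ⟨a, b⟩ hp
        simp only [hP, Finset.mem_filter, Finset.mem_univ, true_and] at hp
        simp only [Finset.mem_Iio]
        exact hp.2 ▸ hp.1
      · rintro ⟨a, b⟩ hab ⟨c, d⟩ hcd h
        simp only [hP, Finset.mem_filter] at hab hcd
        simp only at h
        simp [Prod.ext_iff, h, hab.2, hcd.2]
      · intro j hj
        simp only [Finset.mem_Iio] at hj
        exact ⟨(i, j), by simp [hP, hj], rfl⟩
    rw [h1]
    simp only [h2]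
    rw [Fin.sum_univ_eq_sum_range (fun i => i) n, Finset.sum_range_id, hN,
      Nat.choose_two_right]
  set D : Finset ℝ := P.image (fun p => y p.1 - y p.2) with hD
  have hDcard : D.card = N := by
    rw [hD, Finset.card_image_of_injOn, hPcard]
    rintro ⟨i, j⟩ hp ⟨k, l⟩ hq hpq
    simp only [hP, Finset.coe_filter, Set.mem_setOf_eq, Finset.mem_univ, true_and] at hp hq
    by_contra hne
    exact hydist i j k l hp hq (by simpa using hne) hpq
  have hDpos : ∀ r ∈ D, (0:ℝ) < r := by
    intro r hr
    rw [hD, Finset.mem_image] at hr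
    obtain ⟨⟨i, j⟩, hp, rfl⟩ := hr
    simp only [hP, Finset.mem_filter, Finset.mem_univ, true_and] at hp
    have := hy hp
    simp only
    linarith
  have h0D : (0:ℝ) ∉ D := fun h => lt_irrefl 0 (hDpos 0 h)
  set E : Finset ℝ := insert 0 D with hE
  have hEcard : E.card = N + 1 := by
    rw [hE, Finset.card_insert_of_notMem h0D, hDcard]
  set e : Fin (N+1) → ℝ := fun k => E.orderEmbOfFin hEcard k with he
  have hemono : StrictMono e := (E.orderEmbOfFin hEcard).strictMono
  have hemem : ∀ k, e k ∈ E := fun k => E.orderEmbOfFin_mem hEcard k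
  have he0 : e 0 = 0 := by
    have h1 := Finset.orderEmbOfFin_zero hEcard (Nat.succ_pos N)
    show E.orderEmbOfFin hEcard ⟨0, Nat.succ_pos N⟩ = 0
    rw [h1]
    apply le_antisymm
    · exact Finset.min'_le _ _ (by simp [hE])
    · apply Finset.le_min'
      intro r hr
      rcases Finset.mem_insert.1 hr with h | h
      · exact h.ge
      · exact (hDpos r h).le
  have heD : ∀ k : Fin (N+1), 0 < k.1 → e k ∈ D := by
    intro k hk
    have h1 : e 0 < e k := hemono (by
      rw [Fin.lt_def]; simpa using hk)
    rcases Finset.mem_insert.1 (hemem k) with h | h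
    · rw [he0, h] at h1; exact absurd h1 (lt_irrefl 0)
    · exact h
  have henn : ∀ k, 0 ≤ e k := by
    intro k
    have : e 0 ≤ e k := hemono.monotone (Fin.zero_le k)
    rwa [he0] at this
  set xm : ℝ := x ⟨m - 1, by omega⟩ with hxm
  set B : Set ℝ := Set.range (fun z : Fin m × Fin n × Fin n => x z.1 + y z.2.1 - y z.2.2)
    with hB
  have hBfin : B.Finite := Set.finite_range _
  set c : Fin (N+1) → ℝ := fun k =>
    if h : k.1 + 1 < N + 1 then e ⟨k.1+1, h⟩ else e k + 1 with hc
  have hcgt : ∀ k, e k < c k := by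
    intro k
    show e k < if h : k.1 + 1 < N + 1 then e ⟨k.1+1, h⟩ else e k + 1
    split
    · exact hemono (by rw [Fin.lt_def]; simp)
    · linarith
  have hT : ∀ k : Fin (N+1), ∃ t, t ∈ Set.Ioo (xm + e k) (xm + c k) ∧ t ∉ B := by
    intro k
    have hne : (Set.Ioo (xm + e k) (xm + c k) \ B).Nonempty :=
      ((Set.Ioo_infinite (by linarith [hcgt k])).diff hBfin).nonempty
    obtain ⟨t, ht⟩ := hne
    exact ⟨t, ht.1, ht.2⟩
  choose T hT1 hT2 using hT
  have hTgt : ∀ k, xm < T k := fun k =>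
    lt_of_le_of_lt (by linarith [henn k]) (hT1 k).1
  have hTinj : ∀ k, Function.Injective (fun p : Fin (m + 1) × Fin n =>
      (Fin.snoc x (T k) : Fin (m + 1) → ℝ) p.1 + y p.2) := by
    intro k
    rintro ⟨a, i⟩ ⟨b, j⟩ hab
    simp only at hab
    rcases Fin.eq_castSucc_or_eq_last a with ⟨a', rfl⟩ | rfl <;>
      rcases Fin.eq_castSucc_or_eq_last b with ⟨b', rfl⟩ | rfl
    · rw [Fin.snoc_castSucc, Fin.snoc_castSucc] at hab
      have := hinj (a₁ := (a', i)) (a₂ := (b', j)) hab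
      simp only [Prod.mk.injEq] at this ⊢
      exact ⟨congrArg Fin.castSucc this.1, this.2⟩
    · rw [Fin.snoc_castSucc, Fin.snoc_last] at hab
      exact absurd (⟨(a', i, j), by simp only; linarith⟩ : T k ∈ B) (hT2 k)
    · rw [Fin.snoc_last, Fin.snoc_castSucc] at hab
      exact absurd (⟨(b', j, i), by simp only; linarith⟩ : T k ∈ B) (hT2 k)
    · rw [Fin.snoc_last] at hab
      have : y i = y j := by linarith
      simp [hy.injective this]
  set Rel : Fin (N+1) → (Fin (m + 1) × Fin n) → (Fin (m + 1) × Fin n) → Prop :=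
    fun k p q => (Fin.snoc x (T k) : Fin (m + 1) → ℝ) p.1 + y p.2 <
      (Fin.snoc x (T k) : Fin (m + 1) → ℝ) q.1 + y q.2 with hRel
  have hmem : ∀ k, Rel k ∈
      {R : (Fin (m + 1) × Fin n) → (Fin (m + 1) × Fin n) → Prop |
        ∃ t : ℝ, x ⟨m - 1, by omega⟩ < t ∧
          Function.Injective (fun p : Fin (m + 1) × Fin n =>
            (Fin.snoc x t : Fin (m + 1) → ℝ) p.1 + y p.2) ∧
          R = fun p q : Fin (m + 1) × Fin n =>
            (Fin.snoc x t : Fin (m + 1) → ℝ) p.1 + y p.2 <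
              (Fin.snoc x t : Fin (m + 1) → ℝ) q.1 + y q.2} :=
    fun k => ⟨T k, hTgt k, hTinj k, rfl⟩
  have hdist : ∀ k k' : Fin (N+1), k < k' → Rel k ≠ Rel k' := by
    intro k k' hkk' hEq
    have hklt : k.1 < k'.1 := hkk'
    have hk1 : k.1 + 1 < N + 1 := by have := k'.2; omega
    set k1 : Fin (N+1) := ⟨k.1+1, hk1⟩ with hk1def
    have hk1D : e k1 ∈ D := heD k1 (Nat.succ_pos _)
    rw [hD, Finset.mem_image] at hk1D
    obtain ⟨⟨i, j⟩, hpmem, hpe⟩ := hk1D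
    simp only [hP, Finset.mem_filter, Finset.mem_univ, true_and] at hpmem
    simp only at hpe
    set p : Fin (m+1) × Fin n := (Fin.last m, j) with hp2
    set q : Fin (m+1) × Fin n := (Fin.castSucc ⟨m-1, by omega⟩, i) with hq2
    have h1 : Rel k p q := by
      show (Fin.snoc x (T k) : Fin (m + 1) → ℝ) p.1 + y p.2 <
        (Fin.snoc x (T k) : Fin (m + 1) → ℝ) q.1 + y q.2
      simp only [hp2, hq2, Fin.snoc_last, Fin.snoc_castSucc]
      have h2 : T k < xm + c k := (hT1 k).2
      have h3 : c k = e k1 := dif_pos hk1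
      rw [← hxm]
      linarith [h3 ▸ h2, hpe]
    have h2 : ¬ Rel k' p q := by
      have h4 : e k1 ≤ e k' := hemono.monotone (by
        rw [Fin.le_def]; simpa [hk1def] using hklt)
      have h5 := (hT1 k').1
      show ¬ ((Fin.snoc x (T k') : Fin (m + 1) → ℝ) p.1 + y p.2 <
        (Fin.snoc x (T k') : Fin (m + 1) → ℝ) q.1 + y q.2)
      simp only [hp2, hq2, Fin.snoc_last, Fin.snoc_castSucc, not_lt, ← hxm]
      linarith [hpe ▸ h4]
    rw [hEq] at h1
    exact h2 h1
  rw [← Nat.card_coe_set_eq]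
  have hF : Function.Injective (fun k : Fin (N+1) =>
      (⟨Rel k, hmem k⟩ : {R // R ∈ {R : (Fin (m + 1) × Fin n) → (Fin (m + 1) × Fin n) → Prop |
        ∃ t : ℝ, x ⟨m - 1, by omega⟩ < t ∧
          Function.Injective (fun p : Fin (m + 1) × Fin n =>
            (Fin.snoc x t : Fin (m + 1) → ℝ) p.1 + y p.2) ∧
          R = fun p q : Fin (m + 1) × Fin n =>
            (Fin.snoc x t : Fin (m + 1) → ℝ) p.1 + y p.2 <
              (Fin.snoc x t : Fin (m + 1) → ℝ) q.1 + y q.2}})) := by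
    intro k k' h
    simp only [Subtype.mk.injEq] at h
    by_contra hne
    rcases lt_or_gt_of_ne hne with hlt | hgt
    · exact hdist k k' hlt h
    · exact hdist k' k hgt h.symm
  calc N + 1 = Nat.card (Fin (N+1)) := by simp
    _ ≤ _ := Nat.card_le_card_of_injective _ hF
end

section
/- For all m ≤ n, the number of realizable m×n standard Young tableaux satisfies |rSYT(m,n)| ≤ (1/(m! n!)) * ∑_{i=0}^{m+n} binomial(2*C(m,2)*C(n,2) + C(m,2) + C(n,2), i), where C(a,2) = binomial(a,2). -/
open Finset

lemma sum_choose_succ (N d : ℕ) :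
    ∑ i ∈ range (d+1), (N+1).choose i
      = ∑ i ∈ range (d+1), N.choose i + ∑ i ∈ range d, N.choose i := by
  induction d with
  | zero => simp
  | succ d ih =>
      rw [sum_range_succ, ih, sum_range_succ (f := fun i => N.choose i) (n := d+1),
        sum_range_succ (f := fun i => N.choose i) (n := d), Nat.choose_succ_succ]
      ring

/-- convex combination sign lemma -/
lemma exists_ker_point {V : Type} [AddCommGroup V] [Module ℝ V]
    (h : V →ₗ[ℝ] ℝ) {v w : V} (hv : 0 < h v) (hw : h w < 0) :
    ∃ t : ℝ, 0 < t ∧ t < 1 ∧ h (w + t • (v - w)) = 0 := by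
  refine ⟨(-h w) / (h v - h w), div_pos (by linarith) (by linarith), ?_, ?_⟩
  · rw [div_lt_one (by linarith)]; linarith
  · have hne : h v - h w ≠ 0 := by linarith
    have hcalc : h (w + ((-h w) / (h v - h w)) • (v - w))
        = h w + ((-h w) / (h v - h w)) * (h v - h w) := by
      rw [map_add, map_smul, map_sub, smul_eq_mul]
    rw [hcalc, div_mul_cancel₀ _ hne]; ring

lemma card_signPatterns_le (N : ℕ) :
    ∀ (d : ℕ) (V : Type) [AddCommGroup V] [Module ℝ V] [FiniteDimensional ℝ V],
    Module.finrank ℝ V ≤ d → ∀ f : Fin N → V →ₗ[ℝ] ℝ,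
    Nat.card {s : Fin N → Bool // ∃ v : V, ∀ i, s i = decide (0 < f i v)}
      ≤ ∑ i ∈ range (d+1), N.choose i := by
  induction N with
  | zero =>
      intro d V _ _ _ _ f
      have h1 : Nat.card {s : Fin 0 → Bool // ∃ v : V, ∀ i, s i = decide (0 < f i v)} ≤ 1 := by
        haveI hsub : Subsingleton {s : Fin 0 → Bool // ∃ v : V, ∀ i, s i = decide (0 < f i v)} :=
          ⟨fun a b => Subtype.ext (funext fun i => i.elim0)⟩
        have hio : Function.Injective
            (fun _ : {s : Fin 0 → Bool // ∃ v : V, ∀ i, s i = decide (0 < f i v)} =>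
              (0 : Fin 1)) := fun a b _ => Subsingleton.elim a b
        have := Nat.card_le_card_of_injective _ hio
        simpa using this
      have h2 : 1 ≤ ∑ i ∈ range (d+1), Nat.choose 0 i := by
        have := Finset.single_le_sum (f := fun i => Nat.choose 0 i)
          (fun _ _ => Nat.zero_le _) (Finset.mem_range.mpr (Nat.succ_pos d))
        simpa using this
      exact h1.trans h2
  | succ N IH =>
      intro d V _ _ _ hd f
      set g : Fin N → V →ₗ[ℝ] ℝ := fun i => f i.castSucc with hg
      by_cases hf0 : f (Fin.last N) = 0
      · -- zero functional: restriction is injective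
        have hinj : Function.Injective
            (fun a : {s : Fin (N+1) → Bool // ∃ v : V, ∀ i, s i = decide (0 < f i v)} =>
              (⟨fun i => a.1 i.castSucc, by
                obtain ⟨v, hv⟩ := a.2
                exact ⟨v, fun i => hv i.castSucc⟩⟩ :
                {s : Fin N → Bool // ∃ v : V, ∀ i, s i = decide (0 < g i v)})) := by
          rintro ⟨s, hs⟩ ⟨t, ht⟩ hst
          have h0 : ∀ i : Fin N, s i.castSucc = t i.castSucc :=
            fun i => congrFun (congrArg Subtype.val hst) i
          have hsl : s (Fin.last N) = false := by
            obtain ⟨v, hv⟩ := hs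
            have := hv (Fin.last N); rw [hf0] at this; simpa using this
          have htl : t (Fin.last N) = false := by
            obtain ⟨v, hv⟩ := ht
            have := hv (Fin.last N); rw [hf0] at this; simpa using this
          refine Subtype.ext (funext fun i => ?_)
          show s i = t i
          induction i using Fin.lastCases with
          | last => rw [hsl, htl]
          | cast k => exact h0 k
        calc Nat.card {s : Fin (N+1) → Bool // ∃ v : V, ∀ i, s i = decide (0 < f i v)}
            ≤ Nat.card {s : Fin N → Bool // ∃ v : V, ∀ i, s i = decide (0 < g i v)} :=
              Nat.card_le_card_of_injective _ hinj
          _ ≤ ∑ i ∈ range (d+1), N.choose i := IH d V hd g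
          _ ≤ ∑ i ∈ range (d+1), (N+1).choose i :=
              Finset.sum_le_sum fun i _ => Nat.choose_le_choose i (Nat.le_succ N)
      · -- nonzero functional
        obtain ⟨d, rfl⟩ : ∃ d', d = d' + 1 := by
          rcases d with _ | d'
          · exfalso
            apply hf0
            have : Subsingleton V := Module.finrank_zero_iff.mp (Nat.le_zero.mp hd)
            ext v
            rw [Subsingleton.elim v 0]; simp
          · exact ⟨_, rfl⟩
        set K := LinearMap.ker (f (Fin.last N)) with hK
        set g' : Fin N → K →ₗ[ℝ] ℝ := fun i => (g i).comp K.subtype with hg'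
        -- key lemma
        have key : ∀ s : Fin (N+1) → Bool,
            (∃ v : V, ∀ i, s i = decide (0 < f i v)) →
            (s (Fin.last N) = true ∧
              ∃ w : V, (∀ i : Fin N, s i.castSucc = decide (0 < g i w)) ∧ f (Fin.last N) w ≤ 0) →
            ∃ r : K, ∀ i : Fin N, s i.castSucc = decide (0 < g' i r) := by
          intro s ⟨v, hv⟩ ⟨hlast, w, hw, hwle⟩
          have hvpos : 0 < f (Fin.last N) v := by
            have := (hv (Fin.last N)).symm.trans hlast
            simpa using this
          rcases hwle.lt_or_eq with hlt | heq
          case inr => exact ⟨⟨w, LinearMap.mem_ker.mpr heq⟩, fun i => hw i⟩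
          · obtain ⟨t, ht0, ht1, htk⟩ := exists_ker_point (f (Fin.last N)) hvpos hlt
            refine ⟨⟨w + t • (v - w), LinearMap.mem_ker.mpr htk⟩, fun i => ?_⟩
            have hgv := hv i.castSucc
            have hgw := hw i
            have hval : g' i ⟨w + t • (v - w), LinearMap.mem_ker.mpr htk⟩
                = g i w + t * (g i v - g i w) := by
              simp [hg', map_add, map_smul, map_sub, smul_eq_mul]
            rw [hval]
            cases hsi : s i.castSucc with
            | true =>
                rw [hsi] at hgv hgw
                have h1 : 0 < f i.castSucc v := of_decide_eq_true hgv.symm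
                have h2 : 0 < g i w := of_decide_eq_true hgw.symm
                have : 0 < g i w + t * (g i v - g i w) := by nlinarith
                simp [this]
            | false =>
                rw [hsi] at hgv hgw
                have h1 : ¬ 0 < f i.castSucc v := of_decide_eq_false hgv.symm
                have h2 : ¬ 0 < g i w := of_decide_eq_false hgw.symm
                have : ¬ 0 < g i w + t * (g i v - g i w) := by
                  push_neg at h1 h2 ⊢
                  nlinarith
                simp [this]
        -- injection into sum
        classical
        set C : (Fin (N+1) → Bool) → Prop := fun s =>
          s (Fin.last N) = true ∧
            ∃ w : V, (∀ i : Fin N, s i.castSucc = decide (0 < g i w)) ∧ f (Fin.last N) w ≤ 0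
          with hC
        set Ψ : {s : Fin (N+1) → Bool // ∃ v : V, ∀ i, s i = decide (0 < f i v)} →
            {s : Fin N → Bool // ∃ v : V, ∀ i, s i = decide (0 < g i v)} ⊕
            {s : Fin N → Bool // ∃ r : K, ∀ i, s i = decide (0 < g' i r)} :=
          fun a => if h : C a.1 then
              Sum.inr ⟨fun i => a.1 i.castSucc, key a.1 a.2 h⟩
            else
              Sum.inl ⟨fun i => a.1 i.castSucc, by
                obtain ⟨v, hv⟩ := a.2
                exact ⟨v, fun i => hv i.castSucc⟩⟩ with hΨ
        have hinj : Function.Injective Ψ := by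
          rintro ⟨s, hs⟩ ⟨t, ht⟩ hst
          have ext_of : (∀ i : Fin N, s i.castSucc = t i.castSucc) →
              s (Fin.last N) = t (Fin.last N) → (⟨s, hs⟩ :
                {s : Fin (N+1) → Bool // ∃ v : V, ∀ i, s i = decide (0 < f i v)}) = ⟨t, ht⟩ := by
            intro h0 hl
            refine Subtype.ext (funext fun i => ?_)
            show s i = t i
            induction i using Fin.lastCases with
            | last => exact hl
            | cast k => exact h0 k
          by_cases h1 : C s <;> by_cases h2 : C t
          · have e1 : Ψ ⟨s, hs⟩ = Sum.inr ⟨fun i => s i.castSucc, key s hs h1⟩ := dif_pos h1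
            have e2 : Ψ ⟨t, ht⟩ = Sum.inr ⟨fun i => t i.castSucc, key t ht h2⟩ := dif_pos h2
            have hst2 := (e1.symm.trans hst).trans e2
            have h0 : ∀ i : Fin N, s i.castSucc = t i.castSucc := fun i =>
              congrFun (congrArg Subtype.val (Sum.inr_injective hst2)) i
            exact ext_of h0 (h1.1.trans h2.1.symm)
          · have e1 : Ψ ⟨s, hs⟩ = Sum.inr ⟨fun i => s i.castSucc, key s hs h1⟩ := dif_pos h1
            have e2 : Ψ ⟨t, ht⟩ = Sum.inl ⟨fun i => t i.castSucc, by
                obtain ⟨v, hv⟩ := ht; exact ⟨v, fun i => hv i.castSucc⟩⟩ := dif_neg h2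
            have hst2 := (e1.symm.trans hst).trans e2
            simp at hst2
          · have e1 : Ψ ⟨s, hs⟩ = Sum.inl ⟨fun i => s i.castSucc, by
                obtain ⟨v, hv⟩ := hs; exact ⟨v, fun i => hv i.castSucc⟩⟩ := dif_neg h1
            have e2 : Ψ ⟨t, ht⟩ = Sum.inr ⟨fun i => t i.castSucc, key t ht h2⟩ := dif_pos h2
            have hst2 := (e1.symm.trans hst).trans e2
            simp at hst2
          · have e1 : Ψ ⟨s, hs⟩ = Sum.inl ⟨fun i => s i.castSucc, by
                obtain ⟨v, hv⟩ := hs; exact ⟨v, fun i => hv i.castSucc⟩⟩ := dif_neg h1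
            have e2 : Ψ ⟨t, ht⟩ = Sum.inl ⟨fun i => t i.castSucc, by
                obtain ⟨v, hv⟩ := ht; exact ⟨v, fun i => hv i.castSucc⟩⟩ := dif_neg h2
            have hst2 := (e1.symm.trans hst).trans e2
            have h0 : ∀ i : Fin N, s i.castSucc = t i.castSucc := fun i =>
              congrFun (congrArg Subtype.val (Sum.inl_injective hst2)) i
            refine ext_of h0 ?_
            by_contra hne
            rcases Bool.eq_false_or_eq_true (s (Fin.last N)) with hsl | hsl <;>
              rcases Bool.eq_false_or_eq_true (t (Fin.last N)) with htl | htl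
            · exact hne (hsl.trans htl.symm)
            · -- s last true, t last false : C s holds
              apply h1
              refine ⟨hsl, ?_⟩
              obtain ⟨v, hv⟩ := ht
              refine ⟨v, fun i => (h0 i).trans (hv i.castSucc), ?_⟩
              have hd1 := (hv (Fin.last N)).symm.trans htl
              have hd2 := of_decide_eq_false hd1
              linarith
            · -- s last false, t last true : C t holds
              apply h2
              refine ⟨htl, ?_⟩
              obtain ⟨v, hv⟩ := hs
              refine ⟨v, fun i => (h0 i).symm.trans (hv i.castSucc), ?_⟩
              have hd1 := (hv (Fin.last N)).symm.trans hsl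
              have hd2 := of_decide_eq_false hd1
              linarith
            · exact hne (hsl.trans htl.symm)
        have hKd : Module.finrank ℝ K ≤ d := by
          have hrn := LinearMap.finrank_range_add_finrank_ker (f (Fin.last N))
          rw [← hK] at hrn
          have hr1 : 0 < Module.finrank ℝ (LinearMap.range (f (Fin.last N))) := by
            rw [Module.finrank_pos_iff]
            obtain ⟨v, hv⟩ : ∃ v, f (Fin.last N) v ≠ 0 := by
              by_contra hc; push_neg at hc; exact hf0 (LinearMap.ext fun v => hc v)
            exact ⟨⟨f (Fin.last N) v, LinearMap.mem_range_self _ v⟩, 0, by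
              simp [Subtype.ext_iff, hv]⟩
          omega
        calc Nat.card {s : Fin (N+1) → Bool // ∃ v : V, ∀ i, s i = decide (0 < f i v)}
            ≤ Nat.card ({s : Fin N → Bool // ∃ v : V, ∀ i, s i = decide (0 < g i v)} ⊕
              {s : Fin N → Bool // ∃ r : K, ∀ i, s i = decide (0 < g' i r)}) :=
              Nat.card_le_card_of_injective _ hinj
          _ = Nat.card {s : Fin N → Bool // ∃ v : V, ∀ i, s i = decide (0 < g i v)} +
              Nat.card {s : Fin N → Bool // ∃ r : K, ∀ i, s i = decide (0 < g' i r)} :=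
              Nat.card_sum
          _ ≤ ∑ i ∈ range (d+1+1), N.choose i + ∑ i ∈ range (d+1), N.choose i :=
              Nat.add_le_add (IH (d+1) V hd g) (IH d K hKd g')
          _ = ∑ i ∈ range (d+1+1), (N+1).choose i := (sum_choose_succ N (d+1)).symm

lemma card_signPatterns_le' {ι : Type} [Fintype ι] (d : ℕ) (V : Type) [AddCommGroup V]
    [Module ℝ V] [FiniteDimensional ℝ V] (hd : Module.finrank ℝ V ≤ d)
    (f : ι → V →ₗ[ℝ] ℝ) :
    Nat.card {s : ι → Bool // ∃ v : V, ∀ i, s i = decide (0 < f i v)}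
      ≤ ∑ i ∈ range (d+1), (Fintype.card ι).choose i := by
  classical
  set e := (Fintype.equivFin ι).symm with he
  have hinj : Function.Injective
      (fun a : {s : ι → Bool // ∃ v : V, ∀ i, s i = decide (0 < f i v)} =>
        (⟨fun i => a.1 (e i), by obtain ⟨v, hv⟩ := a.2; exact ⟨v, fun i => hv (e i)⟩⟩ :
          {s : Fin (Fintype.card ι) → Bool // ∃ v : V, ∀ i, s i = decide (0 < f (e i) v)})) := by
    rintro ⟨s, hs⟩ ⟨t, ht⟩ hst
    have h0 : ∀ i, s (e i) = t (e i) := fun i => congrFun (congrArg Subtype.val hst) i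
    refine Subtype.ext (funext fun j => ?_)
    have := h0 (e.symm j)
    simpa using this
  exact le_trans (Nat.card_le_card_of_injective _ hinj)
    (card_signPatterns_le (Fintype.card ι) d V hd fun i => f (e i))

lemma bijective_compare_eq {α : Type} {k : ℕ} {f g : α → Fin k}
    (hf : Function.Bijective f) (hg : Function.Bijective g)
    (h : ∀ a b, f a < f b ↔ g a < g b) : f = g := by
  let e := Equiv.ofBijective f hf
  have hmono : StrictMono (g ∘ e.symm) := by
    intro i j hij
    have h1 : f (e.symm i) < f (e.symm j) := by
      show f ((Equiv.ofBijective f hf).symm i) < f ((Equiv.ofBijective f hf).symm j)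
      rw [Equiv.ofBijective_apply_symm_apply f hf, Equiv.ofBijective_apply_symm_apply f hf]
      exact hij
    exact (h _ _).mp h1
  have hsurj : Function.Surjective (g ∘ e.symm) := hg.2.comp e.symm.surjective
  have hiso : ∀ i, (g ∘ e.symm) i = i := by
    intro i
    have h2 := Fin.coe_orderIso_apply (StrictMono.orderIsoOfSurjective _ hmono hsurj) i
    rw [show ((StrictMono.orderIsoOfSurjective _ hmono hsurj) i : Fin k)
      = (g ∘ e.symm) i from rfl] at h2
    exact Fin.ext h2
  funext a
  have h3 := hiso (f a)
  have h4 : e.symm (f a) = a := by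
    show (Equiv.ofBijective f hf).symm (f a) = a
    exact (Equiv.ofBijective f hf).symm_apply_apply a
  simp only [Function.comp_apply] at h3
  rw [h4] at h3
  exact h3.symm

lemma lt_iff_of_gt_iff {α β : Type*} [LinearOrder α] [LinearOrder β] {a b : α} {c d : β}
    (h : b < a ↔ d < c) (ha : a ≠ b) (hc : c ≠ d) : (a < b ↔ c < d) := by
  rcases ha.lt_or_gt with h1 | h1 <;> rcases hc.lt_or_gt with h2 | h2
  · exact iff_of_true h1 h2
  · exact absurd (h.mpr h2) (lt_asymm h1)
  · exact absurd (h.mp h1) (lt_asymm h2)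
  · exact iff_of_false (lt_asymm h1) (lt_asymm h2)

lemma card_ltPairs (m : ℕ) : Fintype.card {p : Fin m × Fin m // p.1 < p.2} = m.choose 2 := by
  have e : {p : Fin m × Fin m // p.1 < p.2} ≃ (Σ b : Fin m, Fin b.val) :=
    { toFun := fun a => ⟨a.1.2, ⟨a.1.1.val, a.2⟩⟩
      invFun := fun x => ⟨(⟨x.2.val, lt_trans x.2.isLt x.1.isLt⟩, x.1), x.2.isLt⟩
      left_inv := fun a => rfl
      right_inv := fun x => rfl }
  rw [Fintype.card_congr e, Fintype.card_sigma]
  simp only [Fintype.card_fin]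
  have h1 : ∑ b : Fin m, b.val = ∑ i ∈ range m, i := Fin.sum_univ_eq_sum_range (fun i => i) m
  have h2 := Finset.sum_range_id_mul_two m
  have h3 := Nat.choose_two_right m
  omega

lemma card_nePairs (n : ℕ) : Fintype.card {p : Fin n × Fin n // p.1 ≠ p.2} = n * n - n := by
  classical
  have e : {p : Fin n × Fin n // p.1 = p.2} ≃ Fin n :=
    { toFun := fun a => a.1.1
      invFun := fun i => ⟨(i, i), rfl⟩
      left_inv := fun a => by
        obtain ⟨⟨x, y⟩, h⟩ := a
        cases h
        rfl
      right_inv := fun i => rfl }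
  have h1 : Fintype.card {p : Fin n × Fin n // p.1 = p.2} = n := by
    rw [Fintype.card_congr e, Fintype.card_fin]
  have h2 := Fintype.card_subtype_compl (fun p : Fin n × Fin n => p.1 = p.2)
  simp only [Fintype.card_prod, Fintype.card_fin, h1] at h2
  convert h2 using 2

lemma two_choose_two (n : ℕ) : n * n - n = 2 * n.choose 2 := by
  have h2 := Finset.sum_range_id_mul_two n
  have h3 := Nat.choose_two_right n
  have h4 : n * (n - 1) = n * n - n := by
    rcases n with _ | k
    · simp
    · have h5 : (k+1) * (k+1) = (k+1) * k + (k+1) := by ring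
      simp only [Nat.succ_sub_one]
      omega
  omega


/-- index type for hyperplanes -/
abbrev HypIdx (m n : ℕ) : Type :=
  {p : (Fin m × Fin n) × (Fin m × Fin n) // p.1.1 < p.2.1 ∧ p.1.2 ≠ p.2.2} ⊕
    ({p : Fin m × Fin m // p.1 < p.2} ⊕ {p : Fin n × Fin n // p.1 < p.2})

noncomputable def px {m n : ℕ} (i : Fin m) : ((Fin m → ℝ) × (Fin n → ℝ)) →ₗ[ℝ] ℝ :=
  (LinearMap.proj i).comp (LinearMap.fst ℝ _ _)

noncomputable def py {m n : ℕ} (j : Fin n) : ((Fin m → ℝ) × (Fin n → ℝ)) →ₗ[ℝ] ℝ :=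
  (LinearMap.proj j).comp (LinearMap.snd ℝ _ _)

@[simp] lemma px_apply {m n : ℕ} (i : Fin m) (v : (Fin m → ℝ) × (Fin n → ℝ)) :
    px i v = v.1 i := rfl

@[simp] lemma py_apply {m n : ℕ} (j : Fin n) (v : (Fin m → ℝ) × (Fin n → ℝ)) :
    py j v = v.2 j := rfl

noncomputable def hypF (m n : ℕ) : HypIdx m n → ((Fin m → ℝ) × (Fin n → ℝ)) →ₗ[ℝ] ℝ
  | Sum.inl p => px p.1.2.1 + py p.1.2.2 - px p.1.1.1 - py p.1.1.2
  | Sum.inr (Sum.inl q) => px q.1.2 - px q.1.1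
  | Sum.inr (Sum.inr r) => py r.1.2 - py r.1.1

@[simp] lemma hypF_inl {m n : ℕ} (p) (v : (Fin m → ℝ) × (Fin n → ℝ)) :
    hypF m n (Sum.inl p) v = v.1 p.1.2.1 + v.2 p.1.2.2 - v.1 p.1.1.1 - v.2 p.1.1.2 := rfl

@[simp] lemma hypF_inrl {m n : ℕ} (q) (v : (Fin m → ℝ) × (Fin n → ℝ)) :
    hypF m n (Sum.inr (Sum.inl q)) v = v.1 q.1.2 - v.1 q.1.1 := rfl

@[simp] lemma hypF_inrr {m n : ℕ} (r) (v : (Fin m → ℝ) × (Fin n → ℝ)) :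
    hypF m n (Sum.inr (Sum.inr r)) v = v.2 r.1.2 - v.2 r.1.1 := rfl

lemma card_hypIdx (m n : ℕ) : Fintype.card (HypIdx m n) =
    2 * m.choose 2 * n.choose 2 + m.choose 2 + n.choose 2 := by
  classical
  have e : {p : (Fin m × Fin n) × (Fin m × Fin n) // p.1.1 < p.2.1 ∧ p.1.2 ≠ p.2.2} ≃
      ({q : Fin m × Fin m // q.1 < q.2} × {r : Fin n × Fin n // r.1 ≠ r.2}) :=
    { toFun := fun a => (⟨(a.1.1.1, a.1.2.1), a.2.1⟩, ⟨(a.1.1.2, a.1.2.2), a.2.2⟩)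
      invFun := fun x => ⟨((x.1.1.1, x.2.1.1), (x.1.1.2, x.2.1.2)), ⟨x.1.2, x.2.2⟩⟩
      left_inv := fun a => rfl
      right_inv := fun x => rfl }
  rw [Fintype.card_sum, Fintype.card_sum, Fintype.card_congr e, Fintype.card_prod,
    card_ltPairs, card_ltPairs, card_nePairs, two_choose_two]
  ring

/-- the key injectivity lemma -/
lemma pattern_injective {m n : ℕ} {T T' : Fin m × Fin n → Fin (m * n)}
    {x x' : Fin m → ℝ} {y y' : Fin n → ℝ} {σ σ' : Equiv.Perm (Fin m)}
    {τ τ' : Equiv.Perm (Fin n)}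
    (hT : IsSYT T) (hT' : IsSYT T') (hR : Realizes x y T) (hR' : Realizes x' y' T')
    (hiff : ∀ h : HypIdx m n,
      (0 < hypF m n h (fun i => x (σ i), fun j => y (τ j))) ↔
      (0 < hypF m n h (fun i => x' (σ' i), fun j => y' (τ' j)))) :
    σ = σ' ∧ τ = τ' ∧ T = T' := by
  obtain ⟨hx, hy, hoinj, hTx⟩ := hR
  obtain ⟨hx', hy', hoinj', hTx'⟩ := hR'
  -- recover σ
  have hσ : σ = σ' := by
    have hcmp : ∀ i k : Fin m, (σ : Fin m → Fin m) i < σ k ↔ (σ' : Fin m → Fin m) i < σ' k := by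
      have base : ∀ i k : Fin m, i < k → (σ i < σ k ↔ σ' i < σ' k) := by
        intro i k h
        have h1 := hiff (Sum.inr (Sum.inl ⟨(i, k), h⟩))
        simp only [hypF_inrl] at h1
        rw [← hx.lt_iff_lt, ← hx'.lt_iff_lt]
        exact (sub_pos.symm.trans h1).trans sub_pos
      intro i k
      rcases lt_trichotomy i k with h | h | h
      · exact base i k h
      · subst h; simp
      · exact lt_iff_of_gt_iff (base k i h) (σ.injective.ne h.ne')
          (σ'.injective.ne h.ne')
    exact Equiv.coe_fn_injective (bijective_compare_eq σ.bijective σ'.bijective hcmp)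
  have hτ : τ = τ' := by
    have hcmp : ∀ i k : Fin n, (τ : Fin n → Fin n) i < τ k ↔ (τ' : Fin n → Fin n) i < τ' k := by
      have base : ∀ i k : Fin n, i < k → (τ i < τ k ↔ τ' i < τ' k) := by
        intro i k h
        have h1 := hiff (Sum.inr (Sum.inr ⟨(i, k), h⟩))
        simp only [hypF_inrr] at h1
        rw [← hy.lt_iff_lt, ← hy'.lt_iff_lt]
        exact (sub_pos.symm.trans h1).trans sub_pos
      intro i k
      rcases lt_trichotomy i k with h | h | h
      · exact base i k h
      · subst h; simp
      · exact lt_iff_of_gt_iff (base k i h) (τ.injective.ne h.ne')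
          (τ'.injective.ne h.ne')
    exact Equiv.coe_fn_injective (bijective_compare_eq τ.bijective τ'.bijective hcmp)
  subst hσ; subst hτ
  refine ⟨rfl, rfl, ?_⟩
  -- recover T
  set G : Fin m × Fin n → Fin (m * n) := fun p => T (σ p.1, τ p.2) with hG
  set G' : Fin m × Fin n → Fin (m * n) := fun p => T' (σ p.1, τ p.2) with hG'
  have hGbij : Function.Bijective G := hT.1.comp (Equiv.prodCongr σ τ).bijective
  have hG'bij : Function.Bijective G' := hT'.1.comp (Equiv.prodCongr σ τ).bijective
  have hne : ∀ p q : Fin m × Fin n, p ≠ q → G p ≠ G q := by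
    intro p q hpq
    have : (σ p.1, τ p.2) ≠ (σ q.1, τ q.2) := by
      intro e
      apply hpq
      exact Prod.ext (σ.injective (congrArg Prod.fst e)) (τ.injective (congrArg Prod.snd e))
    exact fun e => this (hT.1.1 e)
  have hne' : ∀ p q : Fin m × Fin n, p ≠ q → G' p ≠ G' q := by
    intro p q hpq
    have : (σ p.1, τ p.2) ≠ (σ q.1, τ q.2) := by
      intro e
      apply hpq
      exact Prod.ext (σ.injective (congrArg Prod.fst e)) (τ.injective (congrArg Prod.snd e))
    exact fun e => this (hT'.1.1 e)
  -- generic comparison via mixed hyperplanes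
  have hgen : ∀ p q : Fin m × Fin n, p.1 < q.1 → p.2 ≠ q.2 → (G p < G q ↔ G' p < G' q) := by
    intro p q h1 h2
    have h3 := hiff (Sum.inl ⟨(p, q), ⟨h1, h2⟩⟩)
    simp only [hypF_inl] at h3
    have e1 : G p < G q ↔
        0 < x (σ q.1) + y (τ q.2) - x (σ p.1) - y (τ p.2) := by
      rw [hG]
      rw [hTx (σ p.1, τ p.2) (σ q.1, τ q.2)]
      unfold outerSum
      constructor <;> intro <;> dsimp at * <;> linarith
    have e2 : G' p < G' q ↔
        0 < x' (σ q.1) + y' (τ q.2) - x' (σ p.1) - y' (τ p.2) := by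
      rw [hG']
      rw [hTx' (σ p.1, τ p.2) (σ q.1, τ q.2)]
      unfold outerSum
      constructor <;> intro <;> dsimp at * <;> linarith
    rw [e1, e2]
    exact h3
  have hcmp : ∀ p q : Fin m × Fin n, G p < G q ↔ G' p < G' q := by
    intro p q
    rcases eq_or_ne p.1 q.1 with h1 | h1
    · rcases eq_or_ne p.2 q.2 with h2 | h2
      · have : p = q := Prod.ext h1 h2
        subst this; simp
      · -- same row
        have e1 : G p < G q ↔ y (τ p.2) < y (τ q.2) := by
          rw [hG, hTx (σ p.1, τ p.2) (σ q.1, τ q.2)]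
          unfold outerSum
          rw [h1]
          exact ⟨fun h => by dsimp at h; linarith, fun h => by dsimp; linarith⟩
        have e2 : G' p < G' q ↔ y' (τ p.2) < y' (τ q.2) := by
          rw [hG', hTx' (σ p.1, τ p.2) (σ q.1, τ q.2)]
          unfold outerSum
          rw [h1]
          exact ⟨fun h => by dsimp at h; linarith, fun h => by dsimp; linarith⟩
        rw [e1, e2, hy.lt_iff_lt, hy'.lt_iff_lt]
    · rcases eq_or_ne p.2 q.2 with h2 | h2
      · -- same column
        have e1 : G p < G q ↔ x (σ p.1) < x (σ q.1) := by
          rw [hG, hTx (σ p.1, τ p.2) (σ q.1, τ q.2)]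
          unfold outerSum
          rw [h2]
          exact ⟨fun h => by dsimp at h; linarith, fun h => by dsimp; linarith⟩
        have e2 : G' p < G' q ↔ x' (σ p.1) < x' (σ q.1) := by
          rw [hG', hTx' (σ p.1, τ p.2) (σ q.1, τ q.2)]
          unfold outerSum
          rw [h2]
          exact ⟨fun h => by dsimp at h; linarith, fun h => by dsimp; linarith⟩
        rw [e1, e2, hx.lt_iff_lt, hx'.lt_iff_lt]
      · rcases h1.lt_or_gt with hlt | hlt
        · exact hgen p q hlt h2
        · have hpq : p ≠ q := fun e => h1 (congrArg Prod.fst e)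
          exact lt_iff_of_gt_iff (hgen q p hlt (Ne.symm h2)) (hne p q hpq) (hne' p q hpq)
  have hGeq : G = G' := bijective_compare_eq hGbij hG'bij hcmp
  funext c
  have h5 := congrFun hGeq (σ.symm c.1, τ.symm c.2)
  rw [hG, hG'] at h5
  simpa using h5

theorem rSYT_upper_bound (m n : ℕ) (hmn : m ≤ n) :
    rSYTcard m n * (m.factorial * n.factorial) ≤
      ∑ i ∈ Finset.range (m + n + 1),
        (2 * m.choose 2 * n.choose 2 + m.choose 2 + n.choose 2).choose i := by
  classical
  have hex : ∀ t : {T : Fin m × Fin n → Fin (m * n) // IsSYT T ∧ IsRealizable T},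
      ∃ x y, Realizes x y t.1 := fun t => t.2.2
  choose xw yw hRw using hex
  let pt : {T : Fin m × Fin n → Fin (m * n) // IsSYT T ∧ IsRealizable T} ×
      (Equiv.Perm (Fin m) × Equiv.Perm (Fin n)) → ((Fin m → ℝ) × (Fin n → ℝ)) :=
    fun a => (fun i => xw a.1 (a.2.1 i), fun j => yw a.1 (a.2.2 j))
  let Φ : {T : Fin m × Fin n → Fin (m * n) // IsSYT T ∧ IsRealizable T} ×
      (Equiv.Perm (Fin m) × Equiv.Perm (Fin n)) →
      {s : HypIdx m n → Bool // ∃ v, ∀ h, s h = decide (0 < hypF m n h v)} :=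
    fun a => ⟨fun h => decide (0 < hypF m n h (pt a)), pt a, fun h => rfl⟩
  have hΦ : Function.Injective Φ := by
    rintro ⟨t, σ, τ⟩ ⟨t', σ', τ'⟩ hab
    have hiff : ∀ h : HypIdx m n,
        (0 < hypF m n h (pt (t, σ, τ))) ↔ (0 < hypF m n h (pt (t', σ', τ'))) := by
      intro h
      have h4 := congrFun (congrArg Subtype.val hab) h
      exact decide_eq_decide.mp h4
    obtain ⟨hσ, hτ, hT⟩ := pattern_injective t.2.1 t'.2.1 (hRw t) (hRw t') hiff
    exact Prod.ext (Subtype.ext hT) (Prod.ext hσ hτ)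
  have hfin : Module.finrank ℝ ((Fin m → ℝ) × (Fin n → ℝ)) ≤ m + n := by
    rw [Module.finrank_prod, Module.finrank_pi, Module.finrank_pi,
      Fintype.card_fin, Fintype.card_fin]
  have h1 := Nat.card_le_card_of_injective Φ hΦ
  have h2 := card_signPatterns_le' (m + n) ((Fin m → ℝ) × (Fin n → ℝ)) hfin (hypF m n)
  rw [card_hypIdx] at h2
  have h3 : Nat.card ({T : Fin m × Fin n → Fin (m * n) // IsSYT T ∧ IsRealizable T} ×
      (Equiv.Perm (Fin m) × Equiv.Perm (Fin n)))
      = rSYTcard m n * (m.factorial * n.factorial) := by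
    rw [Nat.card_prod, Nat.card_prod,
      Nat.card_eq_fintype_card (α := Equiv.Perm (Fin m)),
      Nat.card_eq_fintype_card (α := Equiv.Perm (Fin n)),
      Fintype.card_perm, Fintype.card_perm, Fintype.card_fin, Fintype.card_fin]
    rfl
  rw [← h3]
  exact h1.trans (h2.trans_eq rfl)
end

section
/- Let T be the (m-1)×n standard Young tableau with entries T_{ij} = (j-1)(m-1) + i (column-reading tableau). Then T has at least C_n single-row extensions to realizable m×n tableaux, where C_n is the n-th Catalan number. -/
/-- The column-reading tableau of shape `r × n`, with 1-based entry `(j-1)r + i`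
in cell `(i, j)`. -/
def colT (r n : ℕ) : Fin r × Fin n → Fin (r * n) :=
  fun p => ⟨(p.2 : ℕ) * r + (p.1 : ℕ), by
    have h1 := p.1.isLt
    have h2 := p.2.isLt
    calc (p.2 : ℕ) * r + (p.1 : ℕ) < ((p.2 : ℕ) + 1) * r := by nlinarith
      _ ≤ n * r := by nlinarith
      _ = r * n := Nat.mul_comm _ _⟩

lemma exists_y (n : ℕ) (F : Fin n → ℕ) (hmono : Monotone F) (hlt : ∀ j : Fin n, (j : ℕ) < F j) :
    ∃ y : Fin n → ℝ, StrictMono y ∧ (∀ i j, (y i < y j + 1 ↔ (i : ℕ) < F j)) ∧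
      ∀ i j, y i ≠ y j + 1 := by
  classical
  induction n with
  | zero => exact ⟨Fin.elim0, fun i => i.elim0, fun i => i.elim0, fun i => i.elim0⟩
  | succ n ih =>
    rcases Nat.eq_zero_or_pos n with hn | hn
    · subst hn
      refine ⟨fun _ => 0, ?_, ?_, ?_⟩
      · intro i j hij; rw [Fin.lt_def] at hij; omega
      · intro i j
        have hi : (i : ℕ) = 0 := by omega
        have := hlt j
        constructor
        · intro _; omega
        · intro _; norm_num
      · intro i j; norm_num
    · obtain ⟨y₀, hy₀mono, hy₀iff, hy₀ne⟩ :=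
        ih (F ∘ Fin.castSucc) (fun a b hab => hmono (by simpa using hab))
          (fun j => by simpa using hlt j.castSucc)
      set lastIdx : Fin n := ⟨n - 1, by omega⟩ with hlastIdx
      have hle_last : ∀ j : Fin n, y₀ j ≤ y₀ lastIdx := by
        intro j
        exact hy₀mono.monotone (by simp [hlastIdx, Fin.le_def]; omega)
      by_cases hA : ∃ j : Fin n, n < F j.castSucc
      · -- minimal element of A
        set S : Finset (Fin n) := Finset.univ.filter (fun j => n < F j.castSucc) with hS
        have hSne : S.Nonempty := by
          obtain ⟨j, hj⟩ := hA; exact ⟨j, by simp [hS, hj]⟩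
        set j₀ := S.min' hSne with hj₀
        have hj₀S : n < F j₀.castSucc := by
          have := S.min'_mem hSne; simp [hS] at this; exact this
        have hminS : ∀ j : Fin n, n < F j.castSucc → j₀ ≤ j := by
          intro j hj; exact S.min'_le j (by simp [hS, hj])
        have hlow : ∀ j : Fin n, F j.castSucc ≤ n → j < j₀ := by
          intro j hj
          rcases lt_trichotomy j j₀ with h | h | h
          · exact h
          · subst h; omega
          · exfalso
            have : F j₀.castSucc ≤ F j.castSucc := hmono (Fin.castSucc_le_castSucc_iff.mpr h.le)
            omega
        -- upper bound U, lower bound L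
        set U : ℝ := y₀ j₀ + 1 with hU
        set Tlow : Finset ℝ :=
          insert (y₀ lastIdx)
            ((Finset.univ.filter (fun j : Fin n => F j.castSucc ≤ n)).image (fun j => y₀ j + 1))
          with hTlow
        have hTlowne : Tlow.Nonempty := ⟨y₀ lastIdx, by simp [hTlow]⟩
        set L : ℝ := Tlow.max' hTlowne with hL
        have hlast_lt_U : y₀ lastIdx < U := by
          rw [hU]
          exact (hy₀iff lastIdx j₀).mpr (by simp only [Function.comp_apply]; omega)
        have hLU : L < U := by
          rw [hL]
          apply Finset.max'_lt_iff Tlow hTlowne |>.mpr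
          intro a ha
          rw [hTlow] at ha
          simp only [Finset.mem_insert, Finset.mem_image, Finset.mem_filter] at ha
          rcases ha with rfl | ⟨j, ⟨-, hj⟩, rfl⟩
          · exact hlast_lt_U
          · have : j < j₀ := hlow j hj
            have := hy₀mono this
            rw [hU]; linarith
        set t : ℝ := (L + U) / 2 with ht
        have htL : L < t := by rw [ht]; linarith
        have htU : t < U := by rw [ht]; linarith
        have hlast_le_L : y₀ lastIdx ≤ L := Finset.le_max' _ _ (by simp [hTlow])
        have hlt_t : ∀ j : Fin n, y₀ j < t := fun j => lt_of_le_of_lt ((hle_last j).trans hlast_le_L) htL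
        have hlow_le_L : ∀ j : Fin n, F j.castSucc ≤ n → y₀ j + 1 ≤ L := by
          intro j hj
          apply Finset.le_max'
          simp only [hTlow, Finset.mem_insert, Finset.mem_image, Finset.mem_filter]
          exact Or.inr ⟨j, ⟨Finset.mem_univ j, hj⟩, rfl⟩
        refine ⟨Fin.snoc y₀ t, ?_, ?_, ?_⟩
        · intro a b hab
          rcases Fin.eq_castSucc_or_eq_last b with ⟨b', rfl⟩ | rfl
          · rcases Fin.eq_castSucc_or_eq_last a with ⟨a', rfl⟩ | rfl
            · simp only [Fin.snoc_castSucc]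
              exact hy₀mono (Fin.castSucc_lt_castSucc_iff.mp hab)
            · exact absurd hab (Fin.castSucc_lt_last b').asymm
          · rcases Fin.eq_castSucc_or_eq_last a with ⟨a', rfl⟩ | rfl
            · simp only [Fin.snoc_castSucc, Fin.snoc_last]
              exact hlt_t a'
            · exact absurd hab (lt_irrefl _)
        · intro i j
          rcases Fin.eq_castSucc_or_eq_last j with ⟨j', rfl⟩ | rfl
          · rcases Fin.eq_castSucc_or_eq_last i with ⟨i', rfl⟩ | rfl
            · simpa using hy₀iff i' j'
            · simp only [Fin.snoc_castSucc, Fin.snoc_last, Fin.val_last]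
              by_cases hj' : n < F j'.castSucc
              · constructor
                · intro _; exact hj'
                · intro _
                  calc t < U := htU
                    _ ≤ y₀ j' + 1 := by
                        rw [hU]; have := hy₀mono.monotone (hminS j' hj'); linarith
              · push_neg at hj'
                constructor
                · intro h
                  exfalso
                  have := hlow_le_L j' hj'
                  linarith
                · intro h; omega
          · rcases Fin.eq_castSucc_or_eq_last i with ⟨i', rfl⟩ | rfl
            · simp only [Fin.snoc_castSucc, Fin.snoc_last]
              have h1 : y₀ i' < t + 1 := by have := hlt_t i'; linarith
              have h2 : (i'.castSucc : ℕ) < F (Fin.last n) := by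
                have := hlt (Fin.last n); simp only [Fin.val_last] at this
                have : (i' : ℕ) < n + 1 := by omega
                have := hlt (Fin.last n)
                simp only [Fin.coe_castSucc]
                omega
              exact ⟨fun _ => h2, fun _ => h1⟩
            · simp only [Fin.snoc_last]
              have := hlt (Fin.last n)
              constructor
              · intro _; simpa using this
              · intro _; linarith
        · intro i j
          rcases Fin.eq_castSucc_or_eq_last j with ⟨j', rfl⟩ | rfl
          · rcases Fin.eq_castSucc_or_eq_last i with ⟨i', rfl⟩ | rfl
            · simpa using hy₀ne i' j'
            · simp only [Fin.snoc_castSucc, Fin.snoc_last]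
              by_cases hj' : n < F j'.castSucc
              · have : t < y₀ j' + 1 := by
                  calc t < U := htU
                    _ ≤ y₀ j' + 1 := by
                        rw [hU]; have := hy₀mono.monotone (hminS j' hj'); linarith
                exact ne_of_lt this
              · push_neg at hj'
                have := hlow_le_L j' hj'
                have : y₀ j' + 1 < t := lt_of_le_of_lt this htL
                exact ne_of_gt this
          · rcases Fin.eq_castSucc_or_eq_last i with ⟨i', rfl⟩ | rfl
            · simp only [Fin.snoc_castSucc, Fin.snoc_last]
              have := hlt_t i'; intro h; linarith
            · simp only [Fin.snoc_last]; intro h; linarith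
      · push_neg at hA
        set t : ℝ := y₀ lastIdx + 2 with ht
        have hlt_t : ∀ j : Fin n, y₀ j < t := by
          intro j; have := hle_last j; rw [ht]; linarith
        have hgt : ∀ j : Fin n, y₀ j + 1 < t := by
          intro j; have := hle_last j; rw [ht]; linarith
        refine ⟨Fin.snoc y₀ t, ?_, ?_, ?_⟩
        · intro a b hab
          rcases Fin.eq_castSucc_or_eq_last b with ⟨b', rfl⟩ | rfl
          · rcases Fin.eq_castSucc_or_eq_last a with ⟨a', rfl⟩ | rfl
            · simp only [Fin.snoc_castSucc]
              exact hy₀mono (Fin.castSucc_lt_castSucc_iff.mp hab)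
            · exact absurd hab (Fin.castSucc_lt_last b').asymm
          · rcases Fin.eq_castSucc_or_eq_last a with ⟨a', rfl⟩ | rfl
            · simp only [Fin.snoc_castSucc, Fin.snoc_last]
              exact hlt_t a'
            · exact absurd hab (lt_irrefl _)
        · intro i j
          rcases Fin.eq_castSucc_or_eq_last j with ⟨j', rfl⟩ | rfl
          · rcases Fin.eq_castSucc_or_eq_last i with ⟨i', rfl⟩ | rfl
            · simpa using hy₀iff i' j'
            · simp only [Fin.snoc_castSucc, Fin.snoc_last, Fin.val_last]
              have h1 := hA j'
              constructor
              · intro h; exfalso; have := hgt j'; linarith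
              · intro h; omega
          · rcases Fin.eq_castSucc_or_eq_last i with ⟨i', rfl⟩ | rfl
            · simp only [Fin.snoc_castSucc, Fin.snoc_last]
              have h1 : y₀ i' < t + 1 := by have := hlt_t i'; linarith
              have h2 : (i'.castSucc : ℕ) < F (Fin.last n) := by
                have := hlt (Fin.last n); simp only [Fin.val_last] at this
                simp only [Fin.coe_castSucc]; omega
              exact ⟨fun _ => h2, fun _ => h1⟩
            · simp only [Fin.snoc_last]
              have := hlt (Fin.last n)
              exact ⟨fun _ => by simpa using this, fun _ => by linarith⟩
        · intro i j
          rcases Fin.eq_castSucc_or_eq_last j with ⟨j', rfl⟩ | rfl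
          · rcases Fin.eq_castSucc_or_eq_last i with ⟨i', rfl⟩ | rfl
            · simpa using hy₀ne i' j'
            · simp only [Fin.snoc_castSucc, Fin.snoc_last]
              exact ne_of_gt (hgt j')
          · rcases Fin.eq_castSucc_or_eq_last i with ⟨i', rfl⟩ | rfl
            · simp only [Fin.snoc_castSucc, Fin.snoc_last]
              have := hlt_t i'; intro h; linarith
            · simp only [Fin.snoc_last]; intro h; linarith

open List DyckStep

lemma count_U_add_count_D (l : List DyckStep) : l.count U + l.count D = l.length := by
  induction l with
  | nil => simp
  | cons a l ih =>
    cases a <;> simp [List.count_cons, ih] <;> omega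

/-- position just after the `(j+1)`-st `D` in `w`. -/
def dPos (w : List DyckStep) (j : ℕ) : ℕ :=
  Nat.find (⟨w.length + 1, Or.inr (Nat.lt_succ_self _)⟩ :
    ∃ k, j < (w.take k).count D ∨ w.length < k)

/-- number of `U`s before the `(j+1)`-st `D` in `w`. -/
def Fof (w : List DyckStep) (j : ℕ) : ℕ :=
  (w.take (dPos w j)).count U

section facts
variable {w : List DyckStep} {j : ℕ}

lemma count_take_mono (w : List DyckStep) (s : DyckStep) {k k' : ℕ} (h : k ≤ k') :
    (w.take k).count s ≤ (w.take k').count s := by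
  have h1 : w.take k = (w.take k').take k := by rw [List.take_take, min_eq_left h]
  rw [h1]
  exact (List.take_sublist _ _).count_le _

lemma count_take_succ_le (w : List DyckStep) (s : DyckStep) (k : ℕ) :
    (w.take (k + 1)).count s ≤ (w.take k).count s + 1 := by
  rw [List.take_succ, List.count_append]
  have h1 : (w[k]?.toList).count s ≤ (w[k]?.toList).length := List.count_le_length
  have h2 : (w[k]?.toList).length ≤ 1 := by
    rcases h : w[k]? with _ | a <;> simp [h]
  omega

lemma dPos_le_length (hj : j < w.count D) : dPos w j ≤ w.length :=
  Nat.find_le (Or.inl (by rwa [List.take_length]))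

lemma dPos_spec (hj : j < w.count D) : j < (w.take (dPos w j)).count D := by
  have h : j < (w.take (dPos w j)).count D ∨ w.length < dPos w j :=
    Nat.find_spec (⟨w.length + 1, Or.inr (Nat.lt_succ_self _)⟩ :
      ∃ k, j < (w.take k).count D ∨ w.length < k)
  rcases h with h | h
  · exact h
  · have h2 := dPos_le_length hj
    omega

lemma dPos_min (hj : j < w.count D) {k : ℕ} (hk : k < dPos w j) :
    (w.take k).count D ≤ j := by
  have := Nat.find_min (⟨w.length + 1, Or.inr (Nat.lt_succ_self _)⟩ :
    ∃ k, j < (w.take k).count D ∨ w.length < k) hk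
  push_neg at this
  exact this.1

lemma dPos_pos (hj : j < w.count D) : 0 < dPos w j := by
  by_contra h
  push_neg at h
  have h2 := dPos_spec hj
  have h3 : dPos w j = 0 := by omega
  rw [h3] at h2
  simp at h2

lemma count_D_take_dPos (hj : j < w.count D) : (w.take (dPos w j)).count D = j + 1 := by
  have h1 := dPos_spec hj
  have h2 : dPos w j - 1 < dPos w j := by have := dPos_pos hj; omega
  have h3 := dPos_min hj h2
  have h4 := count_take_succ_le w D (dPos w j - 1)
  have h5 : dPos w j - 1 + 1 = dPos w j := by have := dPos_pos hj; omega
  rw [h5] at h4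
  omega

lemma dPos_mono (hj : j < w.count D) {j' : ℕ} (hjj : j ≤ j') (hj' : j' < w.count D) :
    dPos w j ≤ dPos w j' := by
  by_contra h
  push_neg at h
  have h1 := dPos_min hj h
  have h2 := dPos_spec hj'
  omega

lemma Fof_eq (hj : j < w.count D) : dPos w j = Fof w j + j + 1 := by
  have h1 : (w.take (dPos w j)).length = dPos w j :=
    List.length_take_of_le (dPos_le_length hj)
  have h2 := count_U_add_count_D (w.take (dPos w j))
  have h3 := count_D_take_dPos hj
  rw [Fof]
  omega

lemma getElem_eq_D_iff {k : ℕ} (hk : k < w.length) :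
    w[k] = D ↔ ∃ j < w.count D, dPos w j = k + 1 := by
  constructor
  · intro hD
    have hsplit : w.take (k + 1) = w.take k ++ [w[k]] := by
      rw [List.take_succ]
      congr
      rw [List.getElem?_eq_getElem hk]
      rfl
    have hcnt : (w.take (k + 1)).count D = (w.take k).count D + 1 := by
      rw [hsplit, List.count_append, hD]
      simp
    set c := (w.take k).count D with hc
    have hcw : c + 1 ≤ w.count D := by
      have h := (List.take_sublist (k+1) w).count_le D
      omega
    refine ⟨c, by omega, ?_⟩
    have hub : dPos w c ≤ k + 1 := by
      by_contra h
      push_neg at h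
      have := dPos_min (show c < w.count D by omega) (show k + 1 < dPos w c from h)
      omega
    have hlb : k + 1 ≤ dPos w c := by
      by_contra h
      push_neg at h
      have h2 := dPos_spec (show c < w.count D by omega)
      have h3 : (w.take (dPos w c)).count D ≤ (w.take k).count D :=
        count_take_mono w D (by omega)
      omega
    omega
  · rintro ⟨j, hj, hdp⟩
    have h1 := count_D_take_dPos hj
    have h2 := dPos_min hj (show k < dPos w j by omega)
    have hsplit : w.take (k + 1) = w.take k ++ [w[k]] := by
      rw [List.take_succ]
      congr
      rw [List.getElem?_eq_getElem hk]
      rfl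
    rw [hdp, hsplit, List.count_append] at h1
    have hle : ([w[k]] : List DyckStep).count D ≤ 1 := by
      have : ([w[k]] : List DyckStep).count D ≤ ([w[k]] : List DyckStep).length :=
        List.count_le_length
      simpa using this
    have : ([w[k]] : List DyckStep).count D = 1 := by omega
    rcases w[k].dichotomy with h | h
    · rw [h] at this; simp at this
    · exact h

lemma word_eq_of_Fof_eq {w w' : List DyckStep} (hlen : w.length = w'.length)
    (hcnt : w.count D = w'.count D)
    (hF : ∀ j < w.count D, Fof w j = Fof w' j) : w = w' := by
  have hdp : ∀ j < w.count D, dPos w j = dPos w' j := by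
    intro j hj
    rw [Fof_eq hj, Fof_eq (hcnt ▸ hj), hF j hj]
  apply List.ext_getElem hlen
  intro k hk hk'
  have hiff : w[k] = D ↔ w'[k] = D := by
    rw [getElem_eq_D_iff hk, getElem_eq_D_iff hk', ← hcnt]
    constructor
    · rintro ⟨j, hj, h⟩; exact ⟨j, hj, by rw [← hdp j hj]; exact h⟩
    · rintro ⟨j, hj, h⟩; exact ⟨j, hj, by rw [hdp j hj]; exact h⟩
  rcases w[k].dichotomy with h | h <;> rcases (w'[k]).dichotomy with h' | h'
  · rw [h, h']
  · rw [hiff.mpr h'] at h; exact absurd h (by simp)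
  · rw [hiff.mp h] at h'; exact absurd h' (by simp)
  · rw [h, h']
end facts

section dyck
variable {n : ℕ}

lemma dyck_counts (p : DyckWord) (hp : p.semilength = n) :
    p.toList.count U = n ∧ p.toList.count D = n ∧ p.toList.length = 2 * n := by
  have h1 := p.count_U_eq_count_D
  have h3 := count_U_add_count_D p.toList
  have h2 := p.two_mul_semilength_eq_length
  have h4 : p.semilength = p.toList.count U := rfl
  omega

lemma Fof_lt (p : DyckWord) (hp : p.semilength = n) (j : ℕ) (hj : j < n) :
    j < Fof p.toList j := by
  obtain ⟨hU, hD, hL⟩ := dyck_counts p hp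
  have hj' : j < p.toList.count D := by omega
  have h1 := count_D_take_dPos hj'
  have h2 := p.count_D_le_count_U (dPos p.toList j)
  rw [Fof]
  omega

lemma Fof_le (p : DyckWord) (hp : p.semilength = n) (j : ℕ) (hj : j < n) :
    Fof p.toList j ≤ n := by
  obtain ⟨hU, hD, hL⟩ := dyck_counts p hp
  have h := (List.take_sublist (dPos p.toList j) p.toList).count_le U
  rw [Fof]
  omega

lemma Fof_mono (p : DyckWord) (hp : p.semilength = n) {j j' : ℕ} (hjj : j ≤ j')
    (hj' : j' < n) : Fof p.toList j ≤ Fof p.toList j' := by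
  obtain ⟨hU, hD, hL⟩ := dyck_counts p hp
  have h1 : j < p.toList.count D := by omega
  have h2 : j' < p.toList.count D := by omega
  exact count_take_mono _ U (dPos_mono h1 hjj h2)
end dyck

lemma exists_realizing {m n : ℕ} (x : Fin m → ℝ) (y : Fin n → ℝ)
    (hx : StrictMono x) (hy : StrictMono y) (hv : Function.Injective (outerSum x y)) :
    ∃ T : Fin m × Fin n → Fin (m * n), Realizes x y T ∧ IsSYT T := by
  classical
  set v := outerSum x y with hvdef
  set s : Finset ℝ := Finset.image v Finset.univ with hs
  have hcard : s.card = m * n := by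
    rw [hs, Finset.card_image_of_injective _ hv, Finset.card_univ]
    simp [Fintype.card_prod]
  let e := s.orderIsoOfFin hcard
  have hmem : ∀ p, v p ∈ s := by intro p; simp [hs]
  let T : Fin m × Fin n → Fin (m * n) := fun p => e.symm ⟨v p, hmem p⟩
  have key : ∀ p q, T p < T q ↔ v p < v q := by
    intro p q
    have h1 : T p < T q ↔ (⟨v p, hmem p⟩ : s) < ⟨v q, hmem q⟩ := e.symm.lt_iff_lt
    rw [h1, Subtype.mk_lt_mk]
  have hTinj : Function.Injective T := by
    intro p q h
    apply hv
    have : (⟨v p, hmem p⟩ : s) = ⟨v q, hmem q⟩ := e.symm.injective h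
    exact Subtype.ext_iff.mp this
  have hTbij : Function.Bijective T := by
    rw [Fintype.bijective_iff_injective_and_card]
    exact ⟨hTinj, by simp [Fintype.card_prod]⟩
  refine ⟨T, ⟨hx, hy, hv, fun p q => key p q⟩, hTbij, ?_, ?_⟩
  · intro p q h1 h2
    rw [key]
    simp only [hvdef, outerSum, h1]
    exact add_lt_add_right (hy h2) _
  · intro p q h1 h2
    rw [key]
    simp only [hvdef, outerSum, h1]
    exact add_lt_add_left (hx h2) _

lemma exists_extension (r n : ℕ) (hr : 1 ≤ r) (F : Fin n → ℕ) (hmono : Monotone F)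
    (hlt : ∀ j : Fin n, (j : ℕ) < F j) :
    ∃ T' : Fin (r + 1) × Fin n → Fin ((r + 1) * n),
      IsSYT T' ∧ IsRealizable T' ∧
      (∀ p q : Fin r × Fin n,
        T' (p.1.castSucc, p.2) < T' (q.1.castSucc, q.2) ↔ colT r n p < colT r n q) ∧
      (∀ j j' : Fin n, (T' (0, j) < T' (Fin.last r, j') ↔ (j : ℕ) < F j')) := by
  classical
  obtain ⟨y, hy, hyiff, hyne⟩ := exists_y n F hmono hlt
  set B : Finset ℝ :=
    insert 1
      ((((Finset.univ : Finset (Fin n × Fin n)).filter fun q => q.1 ≠ q.2).image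
          fun q => |y q.1 - y q.2|) ∪
        ((Finset.univ : Finset (Fin n × Fin n)).image fun q => |y q.1 - (y q.2 + 1)|)) with hB
  have hBne : B.Nonempty := ⟨1, by simp [hB]⟩
  set μ : ℝ := B.min' hBne with hμ
  have hμpos : 0 < μ := by
    rw [hμ]
    rw [show (0:ℝ) = 0 from rfl]
    apply (Finset.lt_min'_iff B hBne).mpr
    intro b hb
    rw [hB] at hb
    simp only [Finset.mem_insert, Finset.mem_union, Finset.mem_image, Finset.mem_filter,
      Finset.mem_univ, true_and] at hb
    rcases hb with rfl | ⟨⟨q, hq, rfl⟩ | ⟨q, -, rfl⟩⟩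
    · norm_num
    · have : y q.1 ≠ y q.2 := fun h => hq (hy.injective h)
      exact abs_pos.mpr (sub_ne_zero.mpr this)
    · exact abs_pos.mpr (sub_ne_zero.mpr (hyne q.1 q.2))
  have hμ1 : μ ≤ 1 := Finset.min'_le _ _ (by simp [hB])
  have hμgap : ∀ j j' : Fin n, j ≠ j' → μ ≤ |y j - y j'| := by
    intro j j' h
    apply Finset.min'_le
    rw [hB]
    simp only [Finset.mem_insert, Finset.mem_union, Finset.mem_image, Finset.mem_filter,
      Finset.mem_univ, true_and]
    exact Or.inr (Or.inl ⟨(j, j'), h, rfl⟩)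
  have hμne : ∀ j j' : Fin n, μ ≤ |y j - (y j' + 1)| := by
    intro j j'
    apply Finset.min'_le
    rw [hB]
    simp only [Finset.mem_insert, Finset.mem_union, Finset.mem_image, Finset.mem_filter,
      Finset.mem_univ, true_and]
    exact Or.inr (Or.inr ⟨(j, j'), rfl⟩)
  set ε : ℝ := μ / (2 * r) with hε
  have hrR : (1:ℝ) ≤ (r:ℝ) := by exact_mod_cast hr
  have hεpos : 0 < ε := by
    rw [hε]
    apply div_pos hμpos
    linarith
  have hbound : ∀ i : ℕ, i ≤ r → ε * i ≤ μ / 2 := by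
    intro i hi
    have hiR : (i:ℝ) ≤ (r:ℝ) := by exact_mod_cast hi
    rw [hε]
    rw [div_mul_eq_mul_div, div_le_div_iff₀ (by linarith) (by norm_num)]
    nlinarith [hμpos.le]
  have hεnn : ∀ i : ℕ, (0:ℝ) ≤ ε * i := by
    intro i
    positivity
  set x : Fin (r+1) → ℝ := fun i => if (i:ℕ) < r then ε * i else 1 with hx
  have hxval : ∀ i : Fin (r+1), (i:ℕ) < r → x i = ε * i := by
    intro i h; rw [hx]; exact if_pos h
  have hxlast : ∀ i : Fin (r+1), ¬ (i:ℕ) < r → x i = 1 := by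
    intro i h; rw [hx]; exact if_neg h
  have hxmono : StrictMono x := by
    intro a b hab
    rw [Fin.lt_def] at hab
    by_cases hbr : (b:ℕ) < r
    · have har : (a:ℕ) < r := lt_trans hab hbr
      rw [hxval a har, hxval b hbr]
      have hcast : ((a:ℕ):ℝ) < ((b:ℕ):ℝ) := by exact_mod_cast hab
      nlinarith
    · have hb1 : x b = 1 := hxlast b hbr
      have har : (a:ℕ) < r := by have := b.isLt; omega
      rw [hxval a har, hb1]
      have h1 := hbound a (le_of_lt har)
      linarith
  have hvinj : Function.Injective (outerSum x y) := by
    rintro ⟨i, j⟩ ⟨i', j'⟩ hpq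
    simp only [outerSum] at hpq
    have key : ∀ (a b : Fin (r+1)) (c d : Fin n), (a:ℕ) < r → ¬ (b:ℕ) < r →
        x a + y c ≠ x b + y d := by
      intro a b c d ha hb heq
      rw [hxval a ha, hxlast b hb] at heq
      have h1 := hμne c d
      have h2 : y c - (y d + 1) = -(ε * a) := by linarith
      rw [h2, abs_neg, abs_of_nonneg (hεnn a)] at h1
      have h3 := hbound a (le_of_lt ha)
      linarith
    by_cases hi : (i:ℕ) < r <;> by_cases hi' : (i':ℕ) < r
    · rw [hxval i hi, hxval i' hi'] at hpq
      by_cases hj : j = j'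
      · subst hj
        have h1 : ε * (i:ℕ) = ε * (i':ℕ) := by linarith
        have h2 : ((i:ℕ):ℝ) = ((i':ℕ):ℝ) := mul_left_cancel₀ (ne_of_gt hεpos) h1
        have h3 : (i:ℕ) = (i':ℕ) := by exact_mod_cast h2
        exact Prod.ext (Fin.ext h3) rfl
      · exfalso
        have h1 := hμgap j j' hj
        have h2 : y j - y j' = ε * (i':ℕ) - ε * (i:ℕ) := by linarith
        have b1 := hbound i (le_of_lt hi)
        have b2 := hbound i' (le_of_lt hi')
        have h3 : |y j - y j'| ≤ μ / 2 := by
          rw [h2, abs_le]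
          constructor
          · have := hεnn i'; linarith
          · have := hεnn i; linarith
        linarith
    · exact absurd hpq (key i i' j j' hi hi')
    · exact absurd hpq.symm (key i' i j' j hi' hi)
    · rw [hxlast i hi, hxlast i' hi'] at hpq
      have h1 : y j = y j' := by linarith
      have h2 : j = j' := hy.injective h1
      have h3 : i = i' := by
        apply Fin.ext
        have := i.isLt; have := i'.isLt
        omega
      exact Prod.ext h3 h2
  obtain ⟨T, hreal, hsyt⟩ := exists_realizing x y hxmono hy hvinj
  have hcmp : ∀ p q, T p < T q ↔ outerSum x y p < outerSum x y q := hreal.2.2.2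
  have hgap' : ∀ (c d : Fin n), (c:ℕ) < (d:ℕ) → μ ≤ y d - y c := by
    intro c d h
    have hlt : y c < y d := hy (by rwa [Fin.lt_def])
    have := hμgap c d (by intro e; subst e; omega)
    rw [abs_of_neg (by linarith)] at this
    linarith
  refine ⟨T, hsyt, ⟨x, y, hreal⟩, ?_, ?_⟩
  · rintro ⟨i, j⟩ ⟨i', j'⟩
    rw [hcmp]
    simp only [outerSum]
    have hcs : ∀ a : Fin r, ((a.castSucc : Fin (r+1)) : ℕ) = (a:ℕ) := fun a => rfl
    rw [hxval i.castSucc (by rw [hcs]; exact i.isLt), hxval i'.castSucc (by rw [hcs]; exact i'.isLt)]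
    simp only [hcs]
    have hcolt : colT r n (i, j) < colT r n (i', j') ↔
        (j:ℕ) * r + (i:ℕ) < (j':ℕ) * r + (i':ℕ) := by
      rw [Fin.lt_def]; rfl
    rw [hcolt]
    have lhs_of_lt : ∀ (a a' : Fin r) (c c' : Fin n), (c:ℕ) < (c':ℕ) →
        ε * (a:ℕ) + y c < ε * (a':ℕ) + y c' := by
      intro a a' c c' h
      have h1 := hgap' c c' h
      have h2 := hbound a (le_of_lt a.isLt)
      have h3 := hεnn a'
      linarith
    have rhs_of_lt : ∀ (a a' : Fin r) (c c' : Fin n), (c:ℕ) < (c':ℕ) →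
        (c:ℕ) * r + (a:ℕ) < (c':ℕ) * r + (a':ℕ) := by
      intro a a' c c' h
      have h1 : ((c:ℕ) + 1) * r ≤ (c':ℕ) * r := Nat.mul_le_mul_right r (by omega)
      have h2 := a.isLt
      calc (c:ℕ) * r + (a:ℕ) < (c:ℕ) * r + r := by omega
        _ = ((c:ℕ) + 1) * r := by ring
        _ ≤ (c':ℕ) * r := h1
        _ ≤ (c':ℕ) * r + (a':ℕ) := Nat.le_add_right _ _
    rcases lt_trichotomy ((j:ℕ)) ((j':ℕ)) with hc | hc | hc
    · exact iff_of_true (lhs_of_lt i i' j j' hc) (rhs_of_lt i i' j j' hc)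
    · have hjj : j = j' := Fin.ext hc
      subst hjj
      constructor
      · intro h
        have h1 : ε * (i:ℕ) < ε * (i':ℕ) := by linarith
        have h2 : ((i:ℕ):ℝ) < ((i':ℕ):ℝ) := lt_of_mul_lt_mul_left h1 hεpos.le
        have h3 : (i:ℕ) < (i':ℕ) := by exact_mod_cast h2
        omega
      · intro h
        have h3 : (i:ℕ) < (i':ℕ) := by omega
        have h2 : ((i:ℕ):ℝ) < ((i':ℕ):ℝ) := by exact_mod_cast h3
        nlinarith
    · exact iff_of_false (not_lt.mpr (le_of_lt (lhs_of_lt i' i j' j hc)))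
        (not_lt.mpr (le_of_lt (rhs_of_lt i' i j' j hc)))
  · intro j j'
    rw [hcmp]
    simp only [outerSum]
    have h0 : x 0 = 0 := by
      rw [hxval 0 (by simp; omega)]
      simp
    have hlast : x (Fin.last r) = 1 := hxlast (Fin.last r) (by simp)
    rw [h0, hlast]
    rw [show (0:ℝ) + y j = y j by ring, show (1:ℝ) + y j' = y j' + 1 by ring]
    exact hyiff j j'

theorem column_reading_tableau_many_extensions (r n : ℕ) (hr : 1 ≤ r) :
    catalan n ≤ Nat.card {T' : Fin (r + 1) × Fin n → Fin ((r + 1) * n) //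
      IsSYT T' ∧ IsRealizable T' ∧
      ∀ p q : Fin r × Fin n,
        T' (p.1.castSucc, p.2) < T' (q.1.castSucc, q.2) ↔ colT r n p < colT r n q} := by
  classical
  have key : ∀ p : {p : DyckWord // p.semilength = n},
      ∃ T' : Fin (r + 1) × Fin n → Fin ((r + 1) * n),
        (IsSYT T' ∧ IsRealizable T' ∧
          ∀ pp qq : Fin r × Fin n,
            T' (pp.1.castSucc, pp.2) < T' (qq.1.castSucc, qq.2) ↔ colT r n pp < colT r n qq) ∧
        (∀ j j' : Fin n,
          (T' (0, j) < T' (Fin.last r, j') ↔ (j : ℕ) < Fof p.val.toList j')) := by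
    intro p
    obtain ⟨T', h1, h2, h3, h4⟩ := exists_extension r n hr (fun j => Fof p.val.toList j)
      (fun a b hab => Fof_mono p.val p.prop (by exact_mod_cast hab) b.isLt)
      (fun j => Fof_lt p.val p.prop j j.isLt)
    exact ⟨T', ⟨h1, h2, h3⟩, h4⟩
  choose Φ hΦ hook using key
  set S := {T' : Fin (r + 1) × Fin n → Fin ((r + 1) * n) //
      IsSYT T' ∧ IsRealizable T' ∧
      ∀ p q : Fin r × Fin n,
        T' (p.1.castSucc, p.2) < T' (q.1.castSucc, q.2) ↔ colT r n p < colT r n q} with hS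
  have hinj : Function.Injective (fun p : {p : DyckWord // p.semilength = n} =>
      (⟨Φ p, hΦ p⟩ : S)) := by
    intro p q hpq
    have hΦeq : Φ p = Φ q := congrArg Subtype.val hpq
    have hiffs : ∀ j j' : Fin n,
        ((j : ℕ) < Fof p.val.toList j' ↔ (j : ℕ) < Fof q.val.toList j') := by
      intro j j'
      rw [← hook p j j', ← hook q j j', hΦeq]
    have hF : ∀ j' : Fin n, Fof p.val.toList j' = Fof q.val.toList j' := by
      intro j'
      by_contra hne
      have hle1 := Fof_le p.val p.prop j' j'.isLt
      have hle2 := Fof_le q.val q.prop j' j'.isLt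
      rcases Nat.lt_or_ge (Fof p.val.toList j') (Fof q.val.toList j') with h | h
      · have hj : Fof p.val.toList (j' : ℕ) < n := by omega
        have := (hiffs ⟨Fof p.val.toList (j' : ℕ), hj⟩ j').mpr (by simpa using h)
        simp at this
      · have h' : Fof q.val.toList (j' : ℕ) < Fof p.val.toList (j' : ℕ) := by omega
        have hj : Fof q.val.toList (j' : ℕ) < n := by omega
        have := (hiffs ⟨Fof q.val.toList (j' : ℕ), hj⟩ j').mp (by simpa using h')
        simp at this
    obtain ⟨hU1, hD1, hL1⟩ := dyck_counts p.val p.prop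
    obtain ⟨hU2, hD2, hL2⟩ := dyck_counts q.val q.prop
    have hwords : p.val.toList = q.val.toList := by
      apply word_eq_of_Fof_eq (by omega) (by omega)
      intro j hj
      have hj' : j < n := by omega
      simpa using hF ⟨j, hj'⟩
    exact Subtype.ext (DyckWord.ext hwords)
  calc catalan n = Nat.card {p : DyckWord // p.semilength = n} := by
        rw [Nat.card_eq_fintype_card, DyckWord.card_dyckWord_semilength_eq_catalan]
      _ ≤ Nat.card S := Nat.card_le_card_of_injective _ hinj
end
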